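/- arXiv:math/0607276 — 9 statements merged into one kernel-verified Lean document; each statement's English description precedes it below -/
import Mathlib

section
/- Let f : ℝ² → ℝ be continuously differentiable and let σ ∈ ℝ. Then the function φ_σ is continuously differentiable and satisfies the transport equation cos σ · ∂φ_σ/∂x₁ (x₁,x₂) + sin σ · ∂φ_σ/∂x₂ (x₁,x₂) = f(x₁,x₂)/2 for every (x₁,x₂) ∈ ℝ². -/
open Real MeasureTheory

/-- The function `φ_σ` appearing in the description of the β-surfaces of the
Petean metric `2(dx₁dx₃ + dx₂dx₄) + f(x₁,x₂)(dx₁² + dx₂²)`: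
`φ_σ(x₁,x₂) = (1/2)∫₀^λ f(t cos σ − μ sin σ, t sin σ + μ cos σ) dt` with
`λ = x₁ cos σ + x₂ sin σ` and `μ = −x₁ sin σ + x₂ cos σ`. -/
noncomputable def phiPet (f : ℝ × ℝ → ℝ) (σ : ℝ) (x : ℝ × ℝ) : ℝ :=
  (1 / 2) * ∫ t in (0 : ℝ)..(x.1 * Real.cos σ + x.2 * Real.sin σ),
      f (t * Real.cos σ - (-x.1 * Real.sin σ + x.2 * Real.cos σ) * Real.sin σ,
         t * Real.sin σ + (-x.1 * Real.sin σ + x.2 * Real.cos σ) * Real.cos σ)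

section Aux

variable {g : ℝ × ℝ → ℝ}

/-- Partial derivative of `g` in the second variable, as a function. -/
noncomputable def pd2 (g : ℝ × ℝ → ℝ) (q : ℝ × ℝ) : ℝ := fderiv ℝ g q ((0 : ℝ), (1 : ℝ))

lemma pd2_continuous (hg : ContDiff ℝ 1 g) : Continuous (pd2 g) :=
  (hg.continuous_fderiv one_ne_zero).clm_apply continuous_const

lemma hasDerivAt_snd_param (hg : ContDiff ℝ 1 g) (t x : ℝ) :
    HasDerivAt (fun b : ℝ => g (t, b)) (pd2 g (t, x)) x := by
  have hd : HasFDerivAt g (fderiv ℝ g (t, x)) (t, x) :=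
    (hg.differentiable one_ne_zero (t, x)).hasFDerivAt
  have hc : HasDerivAt (fun b : ℝ => ((t : ℝ), b)) ((0 : ℝ), (1 : ℝ)) x :=
    (hasDerivAt_const x t).prodMk (hasDerivAt_id x)
  exact HasFDerivAt.comp_hasDerivAt (f := fun b : ℝ => ((t : ℝ), b)) x hd hc

/-- Differentiation under the integral sign in the parameter. -/
lemma hasDerivAt_param_integral (hg : ContDiff ℝ 1 g) (a₀ b₀ : ℝ) :
    HasDerivAt (fun b : ℝ => ∫ t in (0:ℝ)..a₀, g (t, b))
      (∫ t in (0:ℝ)..a₀, pd2 g (t, b₀)) b₀ := by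
  have hK : IsCompact (Set.uIcc (0:ℝ) a₀ ×ˢ Metric.closedBall b₀ 1) :=
    isCompact_uIcc.prod (isCompact_closedBall _ _)
  obtain ⟨C, hC⟩ := hK.exists_bound_of_continuousOn (pd2_continuous hg).continuousOn
  have h := intervalIntegral.hasDerivAt_integral_of_dominated_loc_of_deriv_le
    (F := fun (x : ℝ) (t : ℝ) => g (t, x)) (F' := fun (x : ℝ) (t : ℝ) => pd2 g (t, x))
    (x₀ := b₀) (a := (0:ℝ)) (b := a₀) (bound := fun _ => C) (s := Metric.ball b₀ 1) (Metric.ball_mem_nhds b₀ one_pos)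
    (Filter.Eventually.of_forall fun x =>
      ((hg.continuous.comp (continuous_id.prodMk continuous_const)).aestronglyMeasurable).restrict)
    ((hg.continuous.comp (continuous_id.prodMk continuous_const)).intervalIntegrable 0 a₀)
    (((pd2_continuous hg).comp (continuous_id.prodMk continuous_const)).aestronglyMeasurable).restrict
    (Filter.Eventually.of_forall fun t ht x hx =>
      hC (t, x) ⟨Set.uIoc_subset_uIcc ht, Metric.ball_subset_closedBall hx⟩)
    (intervalIntegrable_const (μ := volume))
    (Filter.Eventually.of_forall fun t _ x _ => hasDerivAt_snd_param hg t x)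
  exact h.2

lemma abs_sub_le_of_uIoc {a b t : ℝ} (ht : t ∈ Set.uIoc a b) : |t - a| ≤ |b - a| := by
  rcases Set.mem_uIoc.1 ht with ⟨h1, h2⟩ | ⟨h1, h2⟩ <;>
    exact abs_le.2 ⟨by linarith [neg_abs_le (b - a), le_abs_self (b - a)],
      by linarith [neg_abs_le (b - a), le_abs_self (b - a)]⟩

/-- FTC part: derivative of the moving-endpoint piece. -/
lemma hasFDerivAt_moving (hg : ContDiff ℝ 1 g) (p₀ : ℝ × ℝ) :
    HasFDerivAt (fun p : ℝ × ℝ => ∫ t in p₀.1..p.1, g (t, p.2))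
      (g p₀ • ContinuousLinearMap.fst ℝ ℝ ℝ) p₀ := by
  refine HasFDerivAt.of_isLittleO (Asymptotics.isLittleO_iff.2 ?_)
  intro c hc
  obtain ⟨δ, hδpos, hδ⟩ := Metric.continuousAt_iff.1 (hg.continuous.continuousAt (x := p₀)) c hc
  filter_upwards [Metric.ball_mem_nhds p₀ hδpos] with p hp
  have hint : ∀ b : ℝ, IntervalIntegrable (fun t => g (t, b)) volume p₀.1 p.1 :=
    fun b => (hg.continuous.comp (continuous_id.prodMk continuous_const)).intervalIntegrable _ _
  have key : (∫ t in p₀.1..p.1, g (t, p.2)) - (∫ t in p₀.1..p₀.1, g (t, p₀.2))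
      - (g p₀ • ContinuousLinearMap.fst ℝ ℝ ℝ) (p - p₀)
      = ∫ t in p₀.1..p.1, (g (t, p.2) - g p₀) := by
    rw [intervalIntegral.integral_same, intervalIntegral.integral_sub (hint p.2)
      intervalIntegrable_const, intervalIntegral.integral_const]
    simp [smul_eq_mul]
    ring
  rw [key]
  have hbd : ∀ t ∈ Set.uIoc p₀.1 p.1, ‖g (t, p.2) - g p₀‖ ≤ c := by
    intro t ht
    have h1 : dist t p₀.1 ≤ dist p.1 p₀.1 := by
      rw [Real.dist_eq, Real.dist_eq]; exact abs_sub_le_of_uIoc ht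
    have h2 : dist (t, p.2) p₀ < δ := by
      rw [Prod.dist_eq]
      refine max_lt (lt_of_le_of_lt ?_ hp) (lt_of_le_of_lt ?_ hp)
      · exact h1.trans (by rw [Prod.dist_eq]; exact le_max_left _ _)
      · rw [Prod.dist_eq]; exact le_max_right _ _
    have := hδ h2
    rw [Real.dist_eq] at this
    exact le_of_lt (by simpa [Real.norm_eq_abs] using this)
  calc ‖∫ t in p₀.1..p.1, (g (t, p.2) - g p₀)‖ ≤ c * |p.1 - p₀.1| :=
        intervalIntegral.norm_integral_le_of_norm_le_const hbd
    _ ≤ c * ‖p - p₀‖ := by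
        apply mul_le_mul_of_nonneg_left _ hc.le
        calc |p.1 - p₀.1| = ‖(p - p₀).1‖ := by simp [Real.norm_eq_abs]
          _ ≤ ‖p - p₀‖ := norm_fst_le _

/-- The parametric primitive of `g` has an explicit derivative at every point. -/
lemma hasFDerivAt_primitive (hg : ContDiff ℝ 1 g) (p₀ : ℝ × ℝ) :
    HasFDerivAt (fun p : ℝ × ℝ => ∫ t in (0:ℝ)..p.1, g (t, p.2))
      (g p₀ • ContinuousLinearMap.fst ℝ ℝ ℝ
        + (∫ t in (0:ℝ)..p₀.1, pd2 g (t, p₀.2)) • ContinuousLinearMap.snd ℝ ℝ ℝ) p₀ := by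
  have hint : ∀ (a b x : ℝ), IntervalIntegrable (fun t => g (t, x)) volume a b :=
    fun a b x => (hg.continuous.comp (continuous_id.prodMk continuous_const)).intervalIntegrable _ _
  have h1 : HasFDerivAt (fun p : ℝ × ℝ => ∫ t in p₀.1..p.1, g (t, p.2))
      (g p₀ • ContinuousLinearMap.fst ℝ ℝ ℝ) p₀ := hasFDerivAt_moving hg p₀
  have h2 : HasFDerivAt (fun p : ℝ × ℝ => ∫ t in (0:ℝ)..p₀.1, g (t, p.2))
      ((∫ t in (0:ℝ)..p₀.1, pd2 g (t, p₀.2)) • ContinuousLinearMap.snd ℝ ℝ ℝ) p₀ :=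
    (hasDerivAt_param_integral hg p₀.1 p₀.2).comp_hasFDerivAt p₀ (hasFDerivAt_snd)
  have heq : ∀ p : ℝ × ℝ,
      (∫ t in p₀.1..p.1, g (t, p.2)) + (∫ t in (0:ℝ)..p₀.1, g (t, p.2))
        = ∫ t in (0:ℝ)..p.1, g (t, p.2) := by
    intro p
    rw [add_comm]
    exact intervalIntegral.integral_add_adjacent_intervals (hint _ _ _) (hint _ _ _)
  have := h1.add h2
  simpa only [Pi.add_def, heq] using this

lemma contDiff_primitive (hg : ContDiff ℝ 1 g) :
    ContDiff ℝ 1 (fun p : ℝ × ℝ => ∫ t in (0:ℝ)..p.1, g (t, p.2)) := by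
  rw [contDiff_one_iff_fderiv]
  refine ⟨fun p => (hasFDerivAt_primitive hg p).differentiableAt, ?_⟩
  have : fderiv ℝ (fun p : ℝ × ℝ => ∫ t in (0:ℝ)..p.1, g (t, p.2))
      = fun p : ℝ × ℝ => g p • ContinuousLinearMap.fst ℝ ℝ ℝ
        + (∫ t in (0:ℝ)..p.1, pd2 g (t, p.2)) • ContinuousLinearMap.snd ℝ ℝ ℝ :=
    funext fun p => (hasFDerivAt_primitive hg p).fderiv
  rw [this]
  have hI : Continuous fun p : ℝ × ℝ => ∫ t in (0:ℝ)..p.1, pd2 g (t, p.2) := by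
    apply intervalIntegral.continuous_parametric_intervalIntegral_of_continuous
      (f := fun (p : ℝ × ℝ) (t : ℝ) => pd2 g (t, p.2)) (s := fun p : ℝ × ℝ => p.1)
    · exact (pd2_continuous hg).comp (continuous_snd.prodMk (continuous_snd.comp continuous_fst))
    · exact continuous_fst
  exact (hg.continuous.smul continuous_const).add (hI.smul continuous_const)

end Aux

/-- If `f : ℝ² → ℝ` is `C¹`, then `φ_σ` is `C¹` and satisfies the transport equation
`cos σ · ∂φ_σ/∂x₁ + sin σ · ∂φ_σ/∂x₂ = f/2`. -/
theorem statement0 (f : ℝ × ℝ → ℝ) (hf : ContDiff ℝ 1 f) (σ : ℝ) :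
    ContDiff ℝ 1 (phiPet f σ) ∧
    ∀ x : ℝ × ℝ,
      Real.cos σ * fderiv ℝ (phiPet f σ) x (1, 0) +
        Real.sin σ * fderiv ℝ (phiPet f σ) x (0, 1) = f x / 2 := by
  set c := Real.cos σ with hc
  set s := Real.sin σ with hs
  have hcs : c ^ 2 + s ^ 2 = 1 := Real.cos_sq_add_sin_sq σ
  set g : ℝ × ℝ → ℝ := fun q => f (q.1 * c - q.2 * s, q.1 * s + q.2 * c) with hgdef
  have hg : ContDiff ℝ 1 g := by
    apply hf.comp
    exact ((contDiff_fst.mul contDiff_const).sub (contDiff_snd.mul contDiff_const)).prodMk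
      ((contDiff_fst.mul contDiff_const).add (contDiff_snd.mul contDiff_const))
  set F : ℝ × ℝ → ℝ := fun p => ∫ t in (0:ℝ)..p.1, g (t, p.2) with hFdef
  set m : ℝ × ℝ → ℝ × ℝ := fun x => (x.1 * c + x.2 * s, -x.1 * s + x.2 * c) with hmdef
  have hphi : phiPet f σ = fun x => (1 / 2 : ℝ) * F (m x) := rfl
  set M : (ℝ × ℝ) →L[ℝ] (ℝ × ℝ) :=
    (c • ContinuousLinearMap.fst ℝ ℝ ℝ + s • ContinuousLinearMap.snd ℝ ℝ ℝ).prod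
      ((-s) • ContinuousLinearMap.fst ℝ ℝ ℝ + c • ContinuousLinearMap.snd ℝ ℝ ℝ) with hMdef
  have hMm : (⇑M : ℝ × ℝ → ℝ × ℝ) = m := by
    funext y
    simp [hMdef, hmdef, smul_eq_mul]
    constructor <;> ring
  have hm : ContDiff ℝ 1 m := by rw [← hMm]; exact M.contDiff
  have hFC : ContDiff ℝ 1 F := contDiff_primitive hg
  constructor
  · rw [hphi]
    exact contDiff_const.mul (hFC.comp hm)
  · intro x
    have hmx : HasFDerivAt m M x := hMm ▸ M.hasFDerivAt
    have hFd := hasFDerivAt_primitive hg (m x)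
    have hcomp : HasFDerivAt (phiPet f σ)
        ((1 / 2 : ℝ) • ((g (m x) • ContinuousLinearMap.fst ℝ ℝ ℝ
          + (∫ t in (0:ℝ)..(m x).1, pd2 g (t, (m x).2)) • ContinuousLinearMap.snd ℝ ℝ ℝ).comp M))
        x := by
      rw [hphi]
      exact (hFd.comp x hmx).const_mul (1 / 2)
    rw [hcomp.fderiv]
    have hgmx : g (m x) = f x := by
      have hx1 : (x.1 * c + x.2 * s) * c - (-x.1 * s + x.2 * c) * s = x.1 := by
        linear_combination x.1 * hcs
      have hx2 : (x.1 * c + x.2 * s) * s + (-x.1 * s + x.2 * c) * c = x.2 := by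
        linear_combination x.2 * hcs
      show f _ = f x
      rw [show ((x.1 * c + x.2 * s) * c - (-x.1 * s + x.2 * c) * s,
          (x.1 * c + x.2 * s) * s + (-x.1 * s + x.2 * c) * c) = x from by
        rw [hx1, hx2]]
    simp only [ContinuousLinearMap.coe_smul', Pi.smul_apply, ContinuousLinearMap.coe_comp',
      Function.comp_apply, ContinuousLinearMap.add_apply, ContinuousLinearMap.coe_smul,
      hMdef, ContinuousLinearMap.prod_apply, ContinuousLinearMap.coe_fst',
      ContinuousLinearMap.coe_snd', smul_eq_mul]
    rw [hgmx]
    linear_combination (f x / 2) * hcs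
end

section
/- Let f : ℝ² → ℝ be continuously differentiable and let σ ∈ ℝ. Define F : ℝ⁴ → ℝ² by F(x₁,x₂,x₃,x₄) = (−x₁ sin σ + x₂ cos σ, x₃ cos σ + x₄ sin σ + φ_σ(x₁,x₂)). Then F is continuously differentiable, its derivative DF(x) : ℝ⁴ → ℝ² is surjective at every point x, and the kernel of DF(x) is exactly the two-dimensional span of 𝔫₁(f(x₁,x₂),σ) and 𝔫₂(σ). (Hence the level sets of F are the β-surfaces of the Petean metric associated with f.) -/
open Real MeasureTheory

/-- `𝔫₁(c,σ) = (cos σ, sin σ, −(c/2)cos σ, −(c/2)sin σ)`. -/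
noncomputable def frakn₁ (c σ : ℝ) : Fin 4 → ℝ :=
  ![Real.cos σ, Real.sin σ, -(c / 2) * Real.cos σ, -(c / 2) * Real.sin σ]

/-- `𝔫₂(σ) = (0, 0, sin σ, −cos σ)`. -/
noncomputable def frakn₂ (σ : ℝ) : Fin 4 → ℝ :=
  ![0, 0, Real.sin σ, -Real.cos σ]

/-- The map `F(x₁,x₂,x₃,x₄) = (−x₁ sin σ + x₂ cos σ, x₃ cos σ + x₄ sin σ + φ_σ(x₁,x₂))`
whose level sets are the β-surfaces of the Petean metric associated with `f`. -/
noncomputable def Fmap (f : ℝ × ℝ → ℝ) (σ : ℝ) (x : Fin 4 → ℝ) : ℝ × ℝ :=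
  (-(x 0) * Real.sin σ + x 1 * Real.cos σ,
    x 2 * Real.cos σ + x 3 * Real.sin σ + phiPet f σ (x 0, x 1))

noncomputable def hA (f : ℝ × ℝ → ℝ) (σ : ℝ) (q : ℝ × ℝ) : ℝ :=
  f (q.1 * Real.cos σ - q.2 * Real.sin σ, q.1 * Real.sin σ + q.2 * Real.cos σ)

noncomputable def kA (f : ℝ × ℝ → ℝ) (σ : ℝ) (q : ℝ × ℝ) : ℝ :=
  fderiv ℝ (hA f σ) q (0, 1)

noncomputable def HA (f : ℝ × ℝ → ℝ) (σ : ℝ) (p : ℝ × ℝ) : ℝ :=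
  ∫ t in (0 : ℝ)..p.1, hA f σ (t, p.2)

variable {f : ℝ × ℝ → ℝ} {σ : ℝ}

lemma hA_contDiff (hf : ContDiff ℝ 1 f) : ContDiff ℝ 1 (hA f σ) := by
  apply hf.comp
  apply ContDiff.prodMk <;> fun_prop

lemma kA_continuous (hf : ContDiff ℝ 1 f) : Continuous (kA f σ) := by
  have h1 : Continuous (fderiv ℝ (hA f σ)) := (hA_contDiff hf).continuous_fderiv one_ne_zero
  exact h1.clm_apply continuous_const

lemma hasDerivAt_hA_snd (hf : ContDiff ℝ 1 f) (t m : ℝ) :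
    HasDerivAt (fun m => hA f σ (t, m)) (kA f σ (t, m)) m := by
  have h1 : HasDerivAt (fun m : ℝ => ((t : ℝ), m)) ((0 : ℝ), (1 : ℝ)) m :=
    (hasDerivAt_const m t).prodMk (hasDerivAt_id m)
  have h2 : HasFDerivAt (hA f σ) (fderiv ℝ (hA f σ) (t, m)) (t, m) :=
    (((hA_contDiff (σ := σ) hf).differentiable one_ne_zero) (t, m)).hasFDerivAt
  exact h2.comp_hasDerivAt m h1

lemma HA_hasFDerivAt (hf : ContDiff ℝ 1 f) (p : ℝ × ℝ) :
    HasFDerivAt (HA f σ)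
      (hA f σ p • ContinuousLinearMap.fst ℝ ℝ ℝ +
       (∫ t in (0 : ℝ)..p.1, kA f σ (t, p.2)) • ContinuousLinearMap.snd ℝ ℝ ℝ) p := by
  obtain ⟨a₀, m₀⟩ := p
  have hcont : Continuous (hA f σ) := (hA_contDiff hf).continuous
  have hk : Continuous (kA f σ) := kA_continuous hf
  have hcont1 : ∀ m : ℝ, Continuous (fun t => hA f σ (t, m)) :=
    fun m => hcont.comp (continuous_id.prodMk continuous_const)
  -- bound for kA on a compact neighborhood
  obtain ⟨M, hM⟩ := ((isCompact_uIcc (a := (0:ℝ)) (b := a₀)).prod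
    (isCompact_closedBall m₀ 1)).exists_bound_of_continuousOn (hk.continuousOn)
  -- derivative of G : m ↦ ∫ t in 0..a₀, hA f σ (t, m)
  have hG : HasDerivAt (fun m => ∫ t in (0:ℝ)..a₀, hA f σ (t, m))
      (∫ t in (0:ℝ)..a₀, kA f σ (t, m₀)) m₀ := by
    have := intervalIntegral.hasDerivAt_integral_of_dominated_loc_of_deriv_le
      (F := fun m t => hA f σ (t, m)) (F' := fun m t => kA f σ (t, m)) (x₀ := m₀)
      (a := 0) (b := a₀) (μ := volume) (bound := fun _ => M) (s := Metric.ball m₀ 1) (Metric.ball_mem_nhds m₀ one_pos)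
      ?_ ?_ ?_ ?_ ?_ ?_
    · exact this.2
    · filter_upwards with m using ((hcont1 m).aestronglyMeasurable : _)
    · exact (hcont1 m₀).intervalIntegrable _ _
    · exact ((hk.comp (continuous_id.prodMk continuous_const)).aestronglyMeasurable : _)
    · filter_upwards with t ht m hm
      exact hM (t, m) ⟨Set.uIoc_subset_uIcc ht, Metric.ball_subset_closedBall hm⟩
    · exact intervalIntegrable_const
    · filter_upwards with t ht m hm using hasDerivAt_hA_snd hf t m
  -- derivative of R : q ↦ ∫ t in a₀..q.1, hA f σ (t, q.2)
  have hR : HasFDerivAt (fun q : ℝ × ℝ => ∫ t in a₀..q.1, hA f σ (t, q.2))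
      (hA f σ (a₀, m₀) • ContinuousLinearMap.fst ℝ ℝ ℝ) (a₀, m₀) := by
    rw [hasFDerivAt_iff_isLittleO_nhds_zero]
    rw [Asymptotics.isLittleO_iff]
    intro c hc
    obtain ⟨δ, hδ, hδc⟩ := Metric.continuousAt_iff.1 (hcont.continuousAt (x := (a₀, m₀))) c hc
    filter_upwards [Metric.ball_mem_nhds (0 : ℝ × ℝ) hδ] with w hw
    have hw' : ‖w‖ < δ := by simpa using hw
    have hw1 : ‖w.1‖ ≤ ‖w‖ := norm_fst_le w
    have hw2 : ‖w.2‖ ≤ ‖w‖ := norm_snd_le w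
    have key : ∀ t ∈ Set.uIoc a₀ (a₀ + w.1),
        ‖hA f σ (t, m₀ + w.2) - hA f σ (a₀, m₀)‖ ≤ c := by
      intro t ht
      have ht' : |t - a₀| ≤ |w.1| := by
        rcases le_total a₀ (a₀ + w.1) with h | h
        · rw [Set.uIoc_of_le h] at ht
          calc |t - a₀| = t - a₀ := abs_of_pos (by linarith [ht.1])
            _ ≤ w.1 := by linarith [ht.2]
            _ ≤ |w.1| := le_abs_self _
        · rw [Set.uIoc_of_ge h] at ht
          calc |t - a₀| = -(t - a₀) := abs_of_nonpos (by linarith [ht.2])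
            _ ≤ -w.1 := by linarith [ht.1]
            _ ≤ |w.1| := neg_le_abs _
      have hdist : dist ((t, m₀ + w.2) : ℝ × ℝ) (a₀, m₀) < δ := by
        rw [Prod.dist_eq]
        apply max_lt
        · rw [Real.dist_eq]
          calc |t - a₀| ≤ |w.1| := ht'
            _ ≤ ‖w‖ := hw1
            _ < δ := hw'
        · rw [Real.dist_eq]
          calc |m₀ + w.2 - m₀| = |w.2| := by ring_nf
            _ ≤ ‖w‖ := hw2
            _ < δ := hw'
      have := hδc hdist
      rw [Real.dist_eq] at this
      exact le_of_lt this
    have hint1 : IntervalIntegrable (fun t => hA f σ (t, m₀ + w.2)) volume a₀ (a₀ + w.1) :=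
      (hcont1 _).intervalIntegrable _ _
    have heq : (fun q : ℝ × ℝ => ∫ t in a₀..q.1, hA f σ (t, q.2)) ((a₀, m₀) + w)
        - (fun q : ℝ × ℝ => ∫ t in a₀..q.1, hA f σ (t, q.2)) (a₀, m₀)
        - (hA f σ (a₀, m₀) • ContinuousLinearMap.fst ℝ ℝ ℝ) w
        = ∫ t in a₀..(a₀ + w.1), (hA f σ (t, m₀ + w.2) - hA f σ (a₀, m₀)) := by
      simp only [Prod.fst_add, Prod.snd_add, ContinuousLinearMap.coe_smul',
        Pi.smul_apply, ContinuousLinearMap.coe_fst', smul_eq_mul]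
      rw [intervalIntegral.integral_sub hint1 intervalIntegrable_const,
        intervalIntegral.integral_same, intervalIntegral.integral_const]
      simp only [add_sub_cancel_left, smul_eq_mul]
      ring
    rw [heq]
    calc ‖∫ t in a₀..(a₀ + w.1), (hA f σ (t, m₀ + w.2) - hA f σ (a₀, m₀))‖
        ≤ c * |a₀ + w.1 - a₀| := intervalIntegral.norm_integral_le_of_norm_le_const key
      _ ≤ c * ‖w‖ := by
          apply mul_le_mul_of_nonneg_left _ hc.le
          simpa using hw1
  -- combine
  have hsplit : HA f σ = fun q : ℝ × ℝ =>
      (∫ t in (0:ℝ)..a₀, hA f σ (t, q.2)) + ∫ t in a₀..q.1, hA f σ (t, q.2) := by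
    funext q
    rw [HA, intervalIntegral.integral_add_adjacent_intervals
      ((hcont1 q.2).intervalIntegrable _ _) ((hcont1 q.2).intervalIntegrable _ _)]
  rw [hsplit]
  have hGq : HasFDerivAt (fun q : ℝ × ℝ => ∫ t in (0:ℝ)..a₀, hA f σ (t, q.2))
      ((ContinuousLinearMap.smulRight (1 : ℝ →L[ℝ] ℝ)
        (∫ t in (0:ℝ)..a₀, kA f σ (t, m₀))).comp (ContinuousLinearMap.snd ℝ ℝ ℝ)) (a₀, m₀) :=
    by rw [ContinuousLinearMap.smulRight_one_eq_toSpanSingleton]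
       exact hG.hasFDerivAt.comp (a₀, m₀) ((ContinuousLinearMap.snd ℝ ℝ ℝ).hasFDerivAt)
  have := hGq.add hR
  apply this.congr_fderiv
  refine ContinuousLinearMap.ext fun w => ?_
  simp only [ContinuousLinearMap.add_apply, ContinuousLinearMap.coe_comp',
    Function.comp_apply, ContinuousLinearMap.coe_snd', ContinuousLinearMap.smulRight_apply,
    ContinuousLinearMap.one_apply, smul_eq_mul, ContinuousLinearMap.coe_smul',
    Pi.smul_apply, ContinuousLinearMap.coe_fst']
  ring

lemma HA_contDiff (hf : ContDiff ℝ 1 f) : ContDiff ℝ 1 (HA f σ) := by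
  rw [contDiff_one_iff_fderiv]
  refine ⟨fun p => (HA_hasFDerivAt hf p).differentiableAt, ?_⟩
  have hK : Continuous fun p : ℝ × ℝ => ∫ t in (0:ℝ)..p.1, kA f σ (t, p.2) := by
    apply intervalIntegral.continuous_parametric_intervalIntegral_of_continuous
      (f := fun (p : ℝ × ℝ) t => kA f σ (t, p.2)) ?_ continuous_fst
    exact (kA_continuous hf).comp (continuous_snd.prodMk (continuous_snd.comp continuous_fst))
  have hL : Continuous fun p : ℝ × ℝ =>
      hA f σ p • ContinuousLinearMap.fst ℝ ℝ ℝ +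
      (∫ t in (0:ℝ)..p.1, kA f σ (t, p.2)) • ContinuousLinearMap.snd ℝ ℝ ℝ :=
    ((hA_contDiff hf).continuous.smul continuous_const).add (hK.smul continuous_const)
  exact hL.congr fun p => ((HA_hasFDerivAt hf p).fderiv).symm

lemma phi_eq : phiPet f σ = fun x : ℝ × ℝ => (1 / 2 : ℝ) *
    HA f σ (x.1 * Real.cos σ + x.2 * Real.sin σ, -x.1 * Real.sin σ + x.2 * Real.cos σ) := rfl

lemma hA_rho (y : ℝ × ℝ) :
    hA f σ (y.1 * Real.cos σ + y.2 * Real.sin σ, -y.1 * Real.sin σ + y.2 * Real.cos σ) = f y := by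
  have pyth := Real.sin_sq_add_cos_sq σ
  rw [hA]
  congr 1
  apply Prod.ext
  · show (y.1 * Real.cos σ + y.2 * Real.sin σ) * Real.cos σ
      - (-y.1 * Real.sin σ + y.2 * Real.cos σ) * Real.sin σ = y.1
    linear_combination y.1 * pyth
  · show (y.1 * Real.cos σ + y.2 * Real.sin σ) * Real.sin σ
      + (-y.1 * Real.sin σ + y.2 * Real.cos σ) * Real.cos σ = y.2
    linear_combination y.2 * pyth

lemma phi_contDiff (hf : ContDiff ℝ 1 f) : ContDiff ℝ 1 (phiPet f σ) := by
  rw [phi_eq]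
  refine contDiff_const.mul ((HA_contDiff hf).comp ?_)
  exact ((contDiff_fst.mul contDiff_const).add (contDiff_snd.mul contDiff_const)).prodMk
    ((contDiff_fst.neg.mul contDiff_const).add (contDiff_snd.mul contDiff_const))

lemma phi_deriv (hf : ContDiff ℝ 1 f) (y : ℝ × ℝ) :
    ∃ (φ' : (ℝ × ℝ) →L[ℝ] ℝ) (A : ℝ), HasFDerivAt (phiPet f σ) φ' y ∧
      ∀ v : ℝ × ℝ, φ' v = f y / 2 * (v.1 * Real.cos σ + v.2 * Real.sin σ)
        + A * (-v.1 * Real.sin σ + v.2 * Real.cos σ) := by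
  have hρ : HasFDerivAt (fun x : ℝ × ℝ =>
      (x.1 * Real.cos σ + x.2 * Real.sin σ, -x.1 * Real.sin σ + x.2 * Real.cos σ))
      (((Real.cos σ • ContinuousLinearMap.fst ℝ ℝ ℝ +
          Real.sin σ • ContinuousLinearMap.snd ℝ ℝ ℝ)).prod
        (Real.sin σ • -(ContinuousLinearMap.fst ℝ ℝ ℝ) +
          Real.cos σ • ContinuousLinearMap.snd ℝ ℝ ℝ)) y :=
    ((hasFDerivAt_fst.mul_const _).add (hasFDerivAt_snd.mul_const _)).prodMk
      ((hasFDerivAt_fst.neg.mul_const _).add (hasFDerivAt_snd.mul_const _))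
  have hcomp := ((HA_hasFDerivAt (σ := σ) hf
      (y.1 * Real.cos σ + y.2 * Real.sin σ, -y.1 * Real.sin σ + y.2 * Real.cos σ)).comp y hρ
    ).const_mul (1/2 : ℝ)
  refine ⟨(1/2 : ℝ) • ((hA f σ (y.1 * Real.cos σ + y.2 * Real.sin σ,
        -y.1 * Real.sin σ + y.2 * Real.cos σ) • ContinuousLinearMap.fst ℝ ℝ ℝ +
      (∫ t in (0:ℝ)..(y.1 * Real.cos σ + y.2 * Real.sin σ),
        kA f σ (t, -y.1 * Real.sin σ + y.2 * Real.cos σ)) •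
          ContinuousLinearMap.snd ℝ ℝ ℝ).comp
      ((Real.cos σ • ContinuousLinearMap.fst ℝ ℝ ℝ +
          Real.sin σ • ContinuousLinearMap.snd ℝ ℝ ℝ).prod
        (Real.sin σ • -(ContinuousLinearMap.fst ℝ ℝ ℝ) +
          Real.cos σ • ContinuousLinearMap.snd ℝ ℝ ℝ))),
    (1/2 : ℝ) * ∫ t in (0:ℝ)..(y.1 * Real.cos σ + y.2 * Real.sin σ),
      kA f σ (t, -y.1 * Real.sin σ + y.2 * Real.cos σ), ?_, ?_⟩
  · rw [phi_eq]; exact hcomp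
  · intro v
    simp only [ContinuousLinearMap.coe_smul', Pi.smul_apply, ContinuousLinearMap.coe_comp',
      Function.comp_apply, ContinuousLinearMap.add_apply, ContinuousLinearMap.prod_apply,
      ContinuousLinearMap.coe_fst', ContinuousLinearMap.coe_snd', ContinuousLinearMap.neg_apply,
      smul_eq_mul, hA_rho]
    ring

theorem statement1 (f : ℝ × ℝ → ℝ) (hf : ContDiff ℝ 1 f) (σ : ℝ) :
    ContDiff ℝ 1 (Fmap f σ) ∧
    ∀ x : Fin 4 → ℝ,
      Function.Surjective (fderiv ℝ (Fmap f σ) x) ∧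
      LinearMap.ker (fderiv ℝ (Fmap f σ) x : (Fin 4 → ℝ) →ₗ[ℝ] ℝ × ℝ) =
        Submodule.span ℝ ({frakn₁ (f (x 0, x 1)) σ, frakn₂ σ} : Set (Fin 4 → ℝ)) := by
  have pyth := Real.sin_sq_add_cos_sq σ
  have hcd : ∀ i : Fin 4, ContDiff ℝ 1 (fun y : Fin 4 → ℝ => y i) := fun i =>
    (ContinuousLinearMap.proj (R := ℝ) (φ := fun _ : Fin 4 => ℝ) i).contDiff
  set P : Fin 4 → ((Fin 4 → ℝ) →L[ℝ] ℝ) :=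
    fun i => ContinuousLinearMap.proj (R := ℝ) (φ := fun _ : Fin 4 => ℝ) i with hP
  have hp : ∀ (x : Fin 4 → ℝ) (i : Fin 4), HasFDerivAt (fun y : Fin 4 → ℝ => y i) (P i) x :=
    fun x i => (ContinuousLinearMap.proj (R := ℝ) (φ := fun _ : Fin 4 => ℝ) i).hasFDerivAt
  constructor
  · have h2 : ContDiff ℝ 1 (phiPet f σ) := phi_contDiff hf
    have : Fmap f σ = fun x : Fin 4 → ℝ =>
        ((-(x 0) * Real.sin σ + x 1 * Real.cos σ : ℝ),
         (x 2 * Real.cos σ + x 3 * Real.sin σ + phiPet f σ (x 0, x 1) : ℝ)) := rfl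
    rw [this]
    refine ContDiff.prodMk ?_ ?_
    · exact ((hcd 0).neg.mul contDiff_const).add ((hcd 1).mul contDiff_const)
    · exact (((hcd 2).mul contDiff_const).add ((hcd 3).mul contDiff_const)).add
        (h2.comp ((hcd 0).prodMk (hcd 1)))
  · intro x
    obtain ⟨φ', A, hφ, hφv⟩ := phi_deriv hf (x 0, x 1)
    have hπ : HasFDerivAt (fun y : Fin 4 → ℝ => (y 0, y 1))
        ((P 0).prod (P 1)) x :=
      (hp x 0).prodMk (hp x 1)
    have hFeq : Fmap f σ = fun y : Fin 4 → ℝ =>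
        ((-(y 0) * Real.sin σ + y 1 * Real.cos σ : ℝ),
         (y 2 * Real.cos σ + y 3 * Real.sin σ + phiPet f σ (y 0, y 1) : ℝ)) := rfl
    have hF : HasFDerivAt (Fmap f σ)
        ((Real.sin σ • -(P 0) + Real.cos σ • P 1).prod
          ((Real.cos σ • P 2 + Real.sin σ • P 3) +
            φ'.comp ((P 0).prod (P 1)))) x := by
      rw [hFeq]
      exact (((hp x 0).neg.mul_const _).add ((hp x 1).mul_const _)).prodMk
        ((((hp x 2).mul_const _).add ((hp x 3).mul_const _)).add (HasFDerivAt.comp (g := phiPet f σ) x hφ hπ))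
    have happ : ∀ v : Fin 4 → ℝ, fderiv ℝ (Fmap f σ) x v =
        (-(v 0) * Real.sin σ + v 1 * Real.cos σ,
         v 2 * Real.cos σ + v 3 * Real.sin σ + φ' (v 0, v 1)) := by
      intro v
      rw [hF.fderiv]
      simp only [hP, ContinuousLinearMap.prod_apply, ContinuousLinearMap.add_apply,
        ContinuousLinearMap.coe_smul', Pi.smul_apply, ContinuousLinearMap.neg_apply,
        ContinuousLinearMap.proj_apply, smul_eq_mul, ContinuousLinearMap.coe_comp',
        Function.comp_apply]
      refine Prod.ext ?_ ?_ <;> simp <;> ring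
    constructor
    · rintro ⟨u, w⟩
      refine ⟨![-(u * Real.sin σ), u * Real.cos σ,
        (w - A * u) * Real.cos σ, (w - A * u) * Real.sin σ], ?_⟩
      rw [happ]
      simp only [Matrix.cons_val_zero, Matrix.cons_val_one, Matrix.head_cons,
        Matrix.cons_val_two, Matrix.tail_cons, Matrix.cons_val_three]
      rw [hφv]
      refine Prod.ext ?_ ?_ <;> simp
      · linear_combination u * pyth
      · linear_combination w * pyth
    · ext v
      simp only [LinearMap.mem_ker, ContinuousLinearMap.coe_coe, happ,
        Submodule.mem_span_pair, Prod.mk_eq_zero]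
      constructor
      · rintro ⟨h1, h2⟩
        rw [hφv] at h2
        refine ⟨v 0 * Real.cos σ + v 1 * Real.sin σ, v 2 * Real.sin σ - v 3 * Real.cos σ, ?_⟩
        funext i
        fin_cases i <;>
          simp only [Pi.add_apply, Pi.smul_apply, frakn₁, frakn₂, smul_eq_mul, Fin.isValue,
            Matrix.cons_val_zero, Matrix.cons_val_one, Matrix.head_cons, Matrix.cons_val_two,
            Matrix.tail_cons, Matrix.cons_val_three, Fin.mk_zero, Fin.mk_one,
            show ((⟨2, by norm_num⟩ : Fin 4) = 2) from rfl,
            show ((⟨3, by norm_num⟩ : Fin 4) = 3) from rfl]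
        · linear_combination Real.sin σ * h1 + v 0 * pyth
        · linear_combination (-Real.cos σ) * h1 + v 1 * pyth
        · linear_combination (-Real.cos σ) * h2 + A * Real.cos σ * h1 + v 2 * pyth
        · linear_combination (-Real.sin σ) * h2 + A * Real.sin σ * h1 + v 3 * pyth
      · rintro ⟨a, b, rfl⟩
        rw [hφv]
        simp only [Pi.add_apply, Pi.smul_apply, frakn₁, frakn₂, smul_eq_mul,
          Matrix.cons_val_zero, Matrix.cons_val_one, Matrix.head_cons,
          Matrix.cons_val_two, Matrix.tail_cons, Matrix.cons_val_three]
        constructor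
        · ring
        · ring
end

section
/- Let f : ℝ² → ℝ be a Schwartz function. Then for every σ ∈ ℝ there exists a Schwartz function g : ℝ → ℝ such that g(μ) = f̂(σ,μ) for all μ ∈ ℝ; in particular μ ↦ f̂(σ,μ) is smooth and, together with all its derivatives, decays faster than any inverse power of |μ|. -/
open Real MeasureTheory

/-- The Radon transform `f̂(σ,μ) = ∫_ℝ f(t cos σ − μ sin σ, t sin σ + μ cos σ) dt`. -/
noncomputable def radon (f : ℝ × ℝ → ℝ) (σ μ : ℝ) : ℝ :=
  ∫ t : ℝ, f (t * Real.cos σ - μ * Real.sin σ, t * Real.sin σ + μ * Real.cos σ)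

namespace Statement5Aux

open SchwartzMap

/-- Partial integral of a Schwartz function on `ℝ × ℝ` over the first variable. -/
noncomputable def pint (F : SchwartzMap (ℝ × ℝ) ℝ) (μ : ℝ) : ℝ := ∫ t : ℝ, F (t, μ)

/-- Derivative in the second coordinate direction. -/
noncomputable def D : SchwartzMap (ℝ × ℝ) ℝ →L[ℝ] SchwartzMap (ℝ × ℝ) ℝ :=
  LineDeriv.lineDerivOpCLM ℝ (SchwartzMap (ℝ × ℝ) ℝ) ((0 : ℝ), (1 : ℝ))

lemma pointwise_bound (G : SchwartzMap (ℝ × ℝ) ℝ) (k : ℕ) :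
    ∃ C : ℝ, 0 ≤ C ∧ ∀ t μ : ℝ,
      |G (t, μ)| ≤ C / (1 + |μ|) ^ k * (1 + t ^ 2)⁻¹ := by
  refine ⟨2 ^ (k + 2) *
    ((Finset.Iic (k + 2, 0)).sup (fun m => SchwartzMap.seminorm ℝ m.1 m.2) G : ℝ),
    by positivity, fun t μ => ?_⟩
  have h := one_add_le_sup_seminorm_apply (𝕜 := ℝ) (m := (k + 2, 0)) le_rfl le_rfl G (t, μ)
  rw [norm_iteratedFDeriv_zero] at h
  set C : ℝ := 2 ^ (k + 2) *
    ((Finset.Iic (k + 2, 0)).sup (fun m => SchwartzMap.seminorm ℝ m.1 m.2) G : ℝ) with hCdef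
  have hC0 : 0 ≤ C := by positivity
  have hnorm : ‖((t, μ) : ℝ × ℝ)‖ = max |t| |μ| := by
    simp [Prod.norm_def, Real.norm_eq_abs]
  have hGa : ‖G (t, μ)‖ = |G (t, μ)| := Real.norm_eq_abs _
  have h1 : (1 + t ^ 2) * ((1 + |μ|) ^ k * |G (t, μ)|) ≤ C := by
    have ht : (1 + |t|) ≤ 1 + max |t| |μ| := by
      have := le_max_left |t| |μ|; linarith
    have hμ : (1 + |μ|) ≤ 1 + max |t| |μ| := by
      have := le_max_right |t| |μ|; linarith
    have habs : 0 ≤ |G (t, μ)| := abs_nonneg _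
    have hsq : 1 + t ^ 2 ≤ (1 + |t|) ^ 2 := by
      nlinarith [abs_nonneg t, sq_abs t]
    have hkey : (1 + |t|) ^ 2 * ((1 + |μ|) ^ k * |G (t, μ)|) ≤ C := by
      have e1 : (1 + |t|) ^ 2 ≤ (1 + max |t| |μ|) ^ 2 :=
        pow_le_pow_left₀ (by positivity) ht 2
      have e2 : (1 + |μ|) ^ k ≤ (1 + max |t| |μ|) ^ k :=
        pow_le_pow_left₀ (by positivity) hμ k
      have e3 : (1 + |t|) ^ 2 * ((1 + |μ|) ^ k * |G (t, μ)|) ≤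
          (1 + max |t| |μ|) ^ 2 * ((1 + max |t| |μ|) ^ k * |G (t, μ)|) := by
        gcongr
      refine e3.trans ?_
      calc (1 + max |t| |μ|) ^ 2 * ((1 + max |t| |μ|) ^ k * |G (t, μ)|)
          = (1 + max |t| |μ|) ^ (k + 2) * |G (t, μ)| := by rw [pow_add]; ring
        _ ≤ C := by rw [← hnorm, ← hGa]; exact h
    refine le_trans ?_ hkey
    have hPA : 0 ≤ (1 + |μ|) ^ k * |G (t, μ)| := by positivity
    exact mul_le_mul_of_nonneg_right hsq hPA
  have hpos : (0 : ℝ) < (1 + |μ|) ^ k * (1 + t ^ 2) := by positivity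
  have heq : C / (1 + |μ|) ^ k * (1 + t ^ 2)⁻¹ = C / ((1 + |μ|) ^ k * (1 + t ^ 2)) := by
    rw [div_eq_mul_inv, mul_assoc, ← mul_inv, ← div_eq_mul_inv]
  rw [heq, le_div_iff₀ hpos]
  nlinarith [h1]

lemma slice_integrable (G : SchwartzMap (ℝ × ℝ) ℝ) (μ : ℝ) :
    Integrable (fun t : ℝ => G (t, μ)) := by
  obtain ⟨C, hC0, hC⟩ := pointwise_bound G 0
  refine Integrable.mono' ((integrable_inv_one_add_sq).const_mul (C / (1 + |μ|) ^ 0))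
    ((G.continuous.comp (continuous_id.prodMk continuous_const)).aestronglyMeasurable) ?_
  filter_upwards with t
  simpa [Real.norm_eq_abs] using hC t μ

lemma pint_hasDerivAt (F : SchwartzMap (ℝ × ℝ) ℝ) (μ₀ : ℝ) :
    HasDerivAt (pint F) (pint (D F) μ₀) μ₀ := by
  obtain ⟨C, hC0, hC⟩ := pointwise_bound (D F) 0
  have h := hasDerivAt_integral_of_dominated_loc_of_deriv_le (μ := volume) (𝕜 := ℝ)
    (F := fun μ t => F (t, μ)) (F' := fun μ t => (D F) (t, μ)) (x₀ := μ₀)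
    (bound := fun t => C * (1 + t ^ 2)⁻¹) (s := Set.univ) Filter.univ_mem
    (Filter.Eventually.of_forall fun μ => (slice_integrable F μ).aestronglyMeasurable)
    (slice_integrable F μ₀)
    (slice_integrable (D F) μ₀).aestronglyMeasurable
    ?_ ((integrable_inv_one_add_sq).const_mul C) ?_
  · exact h.2
  · filter_upwards with t
    intro μ hμ
    simpa [Real.norm_eq_abs] using hC t μ
  · filter_upwards with t
    intro μ hμ
    have hprod : HasDerivAt (fun μ : ℝ => ((t, μ) : ℝ × ℝ)) ((0 : ℝ), (1 : ℝ)) μ :=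
      (hasDerivAt_const μ t).prodMk (hasDerivAt_id μ)
    have hF : HasFDerivAt (⇑F) (fderiv ℝ F (t, μ)) (t, μ) :=
      (F.differentiable.differentiableAt).hasFDerivAt
    have := hF.comp_hasDerivAt μ hprod
    simpa [D, LineDeriv.lineDerivOpCLM_apply, SchwartzMap.lineDerivOp_apply_eq_fderiv, Function.comp_def] using this

lemma pint_iteratedDeriv (n : ℕ) (F : SchwartzMap (ℝ × ℝ) ℝ) :
    iteratedDeriv n (pint F) = pint ((D : _ →L[ℝ] _)^[n] F) ∧ ContDiff ℝ n (pint F) := by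
  induction n generalizing F with
  | zero =>
    refine ⟨by simp [iteratedDeriv_zero], ?_⟩
    rw [show ((0 : ℕ) : WithTop ℕ∞) = 0 from rfl, contDiff_zero]
    exact Differentiable.continuous fun μ => (pint_hasDerivAt F μ).differentiableAt
  | succ n ih =>
    have hd : deriv (pint F) = pint (D F) := funext fun μ => (pint_hasDerivAt F μ).deriv
    constructor
    · rw [iteratedDeriv_succ', hd, (ih (D F)).1, Function.iterate_succ_apply]
    · rw [show ((n + 1 : ℕ) : WithTop ℕ∞) = (n : WithTop ℕ∞) + 1 by push_cast; ring]
      refine contDiff_succ_iff_deriv.2 ⟨fun μ => (pint_hasDerivAt F μ).differentiableAt, ?_, ?_⟩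
      · intro h; exact absurd h (by simp)
      · rw [hd]; exact (ih (D F)).2

lemma pint_decay (F : SchwartzMap (ℝ × ℝ) ℝ) (k n : ℕ) :
    ∃ C : ℝ, ∀ μ : ℝ, ‖μ‖ ^ k * ‖iteratedFDeriv ℝ n (pint F) μ‖ ≤ C := by
  set G := (D : _ →L[ℝ] _)^[n] F with hG
  obtain ⟨C, hC0, hC⟩ := pointwise_bound G k
  set I : ℝ := ∫ t : ℝ, (1 + t ^ 2)⁻¹ with hI
  have hI0 : 0 ≤ I := integral_nonneg fun t => by positivity
  refine ⟨C * I, fun μ => ?_⟩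
  rw [norm_iteratedFDeriv_eq_norm_iteratedDeriv, (pint_iteratedDeriv n F).1]
  have hint : ‖pint G μ‖ ≤ C / (1 + |μ|) ^ k * I := by
    have := norm_integral_le_of_norm_le (μ := volume) (f := fun t : ℝ => G (t, μ))
      (g := fun t : ℝ => C / (1 + |μ|) ^ k * (1 + t ^ 2)⁻¹)
      ((integrable_inv_one_add_sq).const_mul _)
      (Filter.Eventually.of_forall fun t => by simpa [Real.norm_eq_abs] using hC t μ)
    rw [integral_const_mul] at this
    exact this
  have hμk : |μ| ^ k ≤ (1 + |μ|) ^ k :=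
    pow_le_pow_left₀ (abs_nonneg μ) (by linarith [abs_nonneg μ]) k
  have hfrac : |μ| ^ k / (1 + |μ|) ^ k ≤ 1 :=
    div_le_one_of_le₀ hμk (by positivity)
  calc ‖μ‖ ^ k * ‖pint G μ‖ ≤ |μ| ^ k * (C / (1 + |μ|) ^ k * I) := by
        rw [Real.norm_eq_abs]
        exact mul_le_mul_of_nonneg_left hint (by positivity)
    _ = (|μ| ^ k / (1 + |μ|) ^ k) * (C * I) := by ring
    _ ≤ 1 * (C * I) := mul_le_mul_of_nonneg_right hfrac (by positivity)
    _ = C * I := one_mul _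

/-- The partial integral as a Schwartz function. -/
noncomputable def pintS (F : SchwartzMap (ℝ × ℝ) ℝ) : SchwartzMap ℝ ℝ where
  toFun := pint F
  smooth' := contDiff_infty.2 fun n => (pint_iteratedDeriv n F).2
  decay' := fun k n => pint_decay F k n

lemma pintS_apply (F : SchwartzMap (ℝ × ℝ) ℝ) (μ : ℝ) :
    pintS F μ = ∫ t : ℝ, F (t, μ) := rfl

/-- Rotation by `σ` as a linear map on `ℝ × ℝ`. -/
noncomputable def rotL (σ : ℝ) : (ℝ × ℝ) →ₗ[ℝ] (ℝ × ℝ) where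
  toFun := fun p => (p.1 * Real.cos σ - p.2 * Real.sin σ, p.1 * Real.sin σ + p.2 * Real.cos σ)
  map_add' := by intro p q; ext <;> simp <;> ring
  map_smul' := by intro c p; ext <;> simp <;> ring

lemma rot_inv (σ : ℝ) (p : ℝ × ℝ) : rotL σ (rotL (-σ) p) = p := by
  have h := Real.sin_sq_add_cos_sq σ
  ext
  · simp only [rotL, LinearMap.coe_mk, AddHom.coe_mk, Real.cos_neg, Real.sin_neg]
    linear_combination p.1 * h
  · simp only [rotL, LinearMap.coe_mk, AddHom.coe_mk, Real.cos_neg, Real.sin_neg]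
    linear_combination p.2 * h

/-- Rotation by `σ` as a linear equivalence. -/
noncomputable def rotE (σ : ℝ) : (ℝ × ℝ) ≃ₗ[ℝ] (ℝ × ℝ) :=
  LinearEquiv.ofLinear (rotL σ) (rotL (-σ))
    (LinearMap.ext fun p => rot_inv σ p)
    (LinearMap.ext fun p => by simpa using rot_inv (-σ) p)

end Statement5Aux

open Statement5Aux

/-- For a Schwartz function `f` on ℝ² and any angle `σ`, the Radon transform
`μ ↦ f̂(σ,μ)` is (given by) a Schwartz function of `μ`. -/
theorem statement5 (f : SchwartzMap (ℝ × ℝ) ℝ) (σ : ℝ) :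
    ∃ g : SchwartzMap ℝ ℝ, ∀ μ : ℝ, g μ = radon (⇑f) σ μ := by
  set rot : (ℝ × ℝ) ≃L[ℝ] (ℝ × ℝ) := (rotE σ).toContinuousLinearEquiv with hrot
  set F : SchwartzMap (ℝ × ℝ) ℝ :=
    SchwartzMap.compCLMOfContinuousLinearEquiv ℝ rot f with hF
  refine ⟨pintS F, fun μ => ?_⟩
  rw [pintS_apply, radon]
  have key : ∀ t : ℝ, F (t, μ) =
      f (t * Real.cos σ - μ * Real.sin σ, t * Real.sin σ + μ * Real.cos σ) := by
    intro t
    have h1 : F (t, μ) = f (rot (t, μ)) := rfl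
    have h2 : rot (t, μ) = rotE σ (t, μ) := by
      rw [hrot]; exact congrFun (LinearEquiv.coe_toContinuousLinearEquiv' (rotE σ)) _
    have h3 : rotE σ (t, μ) =
        (t * Real.cos σ - μ * Real.sin σ, t * Real.sin σ + μ * Real.cos σ) := rfl
    rw [h1, h2, h3]
  simp only [key]
end

section
/- (Fourier slice theorem.) Let f : ℝ² → ℝ be a Schwartz function. Then for every σ ∈ ℝ and r ∈ ℝ, ∫_ℝ f̂(σ,μ) e^{−2πirμ} dμ = 𝓕f(−r sin σ, r cos σ), where 𝓕f(ξ) = ∫_{ℝ²} f(x) e^{−2πi⟨x,ξ⟩} dx is the Fourier transform of f. -/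
open Real MeasureTheory

/-- The point `(a, b)` of the Euclidean plane `ℝ²`. -/
noncomputable def pt2 (a b : ℝ) : EuclideanSpace ℝ (Fin 2) :=
  (EuclideanSpace.equiv (Fin 2) ℝ).symm ![a, b]

/-- The Radon transform `f̂(σ,μ) = ∫_ℝ f(t cos σ − μ sin σ, t sin σ + μ cos σ) dt`. -/
noncomputable def radonE (f : EuclideanSpace ℝ (Fin 2) → ℝ) (σ μ : ℝ) : ℝ :=
  ∫ t : ℝ, f (pt2 (t * Real.cos σ - μ * Real.sin σ) (t * Real.sin σ + μ * Real.cos σ))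

/-- Fourier slice theorem: the one-dimensional Fourier transform of the Radon transform
`μ ↦ f̂(σ,μ)` at `r` equals the two-dimensional Fourier transform `𝓕f` of `f`
evaluated at `(−r sin σ, r cos σ)`. -/
theorem statement6 (f : SchwartzMap (EuclideanSpace ℝ (Fin 2)) ℝ) (σ r : ℝ) :
    (∫ μ : ℝ, (radonE (⇑f) σ μ : ℂ) *
        Complex.exp (-2 * (Real.pi : ℂ) * Complex.I * (r : ℂ) * (μ : ℂ)))
      = FourierTransform.fourier (fun x => (f x : ℂ))
          (pt2 (-r * Real.sin σ) (r * Real.cos σ)) := by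
  set c := Real.cos σ with hc
  set s := Real.sin σ with hs
  set M : Matrix (Fin 2) (Fin 2) ℝ := !![c, -s; s, c] with hM
  have hdet : M.det = 1 := by
    rw [hM, Matrix.det_fin_two_of]
    nlinarith [Real.sin_sq_add_cos_sq σ]
  have hT : MeasurePreserving (Matrix.toLin' M) volume volume := by
    refine ⟨(Matrix.toLin' M).continuous_of_finiteDimensional.measurable, ?_⟩
    rw [Real.map_matrix_volume_pi_eq_smul_volume_pi (by rw [hdet]; norm_num)]
    simp [hdet]
  set Φ : ℝ × ℝ → EuclideanSpace ℝ (Fin 2) := fun p =>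
    (MeasurableEquiv.toLp 2 (Fin 2 → ℝ))
      (Matrix.toLin' M ((MeasurableEquiv.finTwoArrow).symm p.swap)) with hΦdef
  have hΦ : MeasurePreserving Φ volume volume :=
    ((EuclideanSpace.volume_preserving_symm_measurableEquiv_toLp (Fin 2)).symm
        (MeasurableEquiv.toLp 2 (Fin 2 → ℝ)).symm).comp
      (hT.comp (((volume_preserving_finTwoArrow ℝ).symm
          MeasurableEquiv.finTwoArrow).comp Measure.measurePreserving_swap))
  have hΦeq : ∀ p : ℝ × ℝ, Φ p = pt2 (p.2 * c - p.1 * s) (p.2 * s + p.1 * c) := by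
    intro p
    refine PiLp.ext fun i => ?_
    fin_cases i <;>
      simp [hΦdef, pt2, hM, Matrix.toLin'_apply, Matrix.mulVec, dotProduct,
        Fin.sum_univ_two, MeasurableEquiv.coe_toLp, MeasurableEquiv.finTwoArrow] <;> ring

  set ξ : EuclideanSpace ℝ (Fin 2) := pt2 (-r * s) (r * c) with hξ
  have hinner : ∀ p : ℝ × ℝ, (inner ℝ (Φ p) ξ : ℝ) = r * p.1 := by
    intro p
    rw [hΦeq]
    simp only [hξ, pt2, PiLp.inner_apply, RCLike.inner_apply, starRingEnd_apply, star_trivial,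
      Fin.sum_univ_two, EuclideanSpace.equiv, Matrix.cons_val_zero, Matrix.cons_val_one,
      Matrix.head_cons, LinearEquiv.coe_symm_mk, PiLp.continuousLinearEquiv_symm_apply,
      PiLp.toLp_apply]
    have hcs : s ^ 2 + c ^ 2 = 1 := by rw [hc, hs]; exact Real.sin_sq_add_cos_sq σ
    linear_combination (r * p.1) * hcs
  have hcont : Continuous fun v : EuclideanSpace ℝ (Fin 2) =>
      Complex.exp (↑(-2 * π * (inner ℝ v ξ : ℝ)) * Complex.I) • (f v : ℂ) := by
    refine Continuous.smul (Complex.continuous_exp.comp ?_) (Complex.continuous_ofReal.comp f.continuous)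
    exact (Complex.continuous_ofReal.comp (((continuous_const.mul
      (Continuous.inner continuous_id continuous_const))))).mul continuous_const
  have key : FourierTransform.fourier (fun x => (f x : ℂ)) ξ
      = ∫ p : ℝ × ℝ, Complex.exp (↑(-2 * π * (r * p.1)) * Complex.I) • (f (Φ p) : ℂ) := by
    rw [Real.fourier_eq']
    rw [← hΦ.map_eq, integral_map hΦ.measurable.aemeasurable
      (hΦ.map_eq ▸ hcont.aestronglyMeasurable)]
    simp_rw [hinner]
  have hint0 : Integrable (fun p : ℝ × ℝ => f (Φ p)) volume :=
    (hΦ.integrable_comp f.continuous.aestronglyMeasurable).mpr f.integrable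
  have hint : Integrable (fun p : ℝ × ℝ =>
      Complex.exp (↑(-2 * π * (r * p.1)) * Complex.I) • (f (Φ p) : ℂ)) volume := by
    simp_rw [smul_eq_mul]
    refine hint0.ofReal.bdd_mul (c := 1) ?_ (Filter.Eventually.of_forall fun p => le_of_eq (Complex.norm_exp_ofReal_mul_I _))
    refine Continuous.aestronglyMeasurable ?_
    exact Complex.continuous_exp.comp ((Complex.continuous_ofReal.comp
      ((continuous_const.mul (continuous_const.mul continuous_fst)))).mul continuous_const)
  rw [key, Measure.volume_eq_prod, MeasureTheory.integral_prod _ (by rw [← Measure.volume_eq_prod]; exact hint)]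
  refine integral_congr_ae (Filter.Eventually.of_forall fun x => ?_)
  have hrad0 : (∫ t : ℝ, f (Φ (x, t))) = radonE (⇑f) σ x := by
    simp_rw [hΦeq]
    rfl
  have hrad : (∫ t : ℝ, ((f (Φ (x, t)) : ℝ) : ℂ)) = ((radonE (⇑f) σ x : ℝ) : ℂ) := by
    rw [← hrad0]
    exact integral_ofReal
  calc (fun μ => (radonE (⇑f) σ μ : ℂ) * Complex.exp (-2 * ↑π * Complex.I * ↑r * ↑μ)) x
      = Complex.exp (↑(-2 * π * (r * x)) * Complex.I) • ((radonE (⇑f) σ x : ℝ) : ℂ) := by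
        simp only [smul_eq_mul]
        rw [mul_comm]
        congr 1
        push_cast
        ring
    _ = ∫ y : ℝ, Complex.exp (↑(-2 * π * (r * x)) * Complex.I) • ((f (Φ (x, y)) : ℝ) : ℂ) := by
        rw [integral_smul, hrad]
    _ = (fun x => ∫ y : ℝ, Complex.exp (↑(-2 * π * (r * (x, y).1)) * Complex.I)
          • ((f (Φ (x, y)) : ℝ) : ℂ)) x := rfl
end

section
/- The Radon transform is injective on Schwartz functions: if f : ℝ² → ℝ is a Schwartz function and f̂(σ,μ) = 0 for all σ, μ ∈ ℝ, then f is identically zero. In particular, the Radon transform is one-to-one on the set of axisymmetric Schwartz functions on ℝ². -/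
open Real MeasureTheory

open FourierTransform SchwartzMap ComplexConjugate

section Rot

/-- rotation by angle `σ` on `ℝ × ℝ`, as a linear map -/
noncomputable def rotL (σ : ℝ) : (ℝ × ℝ) →ₗ[ℝ] ℝ × ℝ :=
  Matrix.toLin (Module.Basis.finTwoProd ℝ) (Module.Basis.finTwoProd ℝ)
    !![Real.cos σ, -Real.sin σ; Real.sin σ, Real.cos σ]

lemma rotL_apply (σ : ℝ) (p : ℝ × ℝ) :
    rotL σ p = (p.1 * Real.cos σ - p.2 * Real.sin σ, p.1 * Real.sin σ + p.2 * Real.cos σ) := by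
  rw [rotL, Matrix.toLin_finTwoProd_apply]
  exact Prod.ext (by ring) (by ring)

lemma rotL_det (σ : ℝ) : LinearMap.det (rotL σ) = 1 := by
  rw [rotL, LinearMap.det_toLin, Matrix.det_fin_two_of]
  linear_combination Real.sin_sq_add_cos_sq σ

/-- rotation as a continuous linear equivalence -/
noncomputable def rotCLE (σ : ℝ) : (ℝ × ℝ) ≃L[ℝ] ℝ × ℝ :=
  LinearEquiv.toContinuousLinearEquiv <| LinearEquiv.ofLinear (rotL σ) (rotL (-σ))
    (by
      apply LinearMap.ext; intro p
      simp only [LinearMap.comp_apply, LinearMap.id_apply, rotL_apply, Real.cos_neg, Real.sin_neg]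
      exact Prod.ext (by linear_combination p.1 * Real.sin_sq_add_cos_sq σ)
        (by linear_combination p.2 * Real.sin_sq_add_cos_sq σ))
    (by
      apply LinearMap.ext; intro p
      simp only [LinearMap.comp_apply, LinearMap.id_apply, rotL_apply, Real.cos_neg, Real.sin_neg]
      exact Prod.ext (by linear_combination p.1 * Real.sin_sq_add_cos_sq σ)
        (by linear_combination p.2 * Real.sin_sq_add_cos_sq σ))

lemma rotCLE_apply (σ : ℝ) (p : ℝ × ℝ) :
    rotCLE σ p = (p.1 * Real.cos σ - p.2 * Real.sin σ, p.1 * Real.sin σ + p.2 * Real.cos σ) :=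
  rotL_apply σ p

lemma rotCLE_measurePreserving (σ : ℝ) :
    MeasurePreserving (⇑(rotCLE σ)) (volume : Measure (ℝ × ℝ)) volume := by
  refine ⟨(rotCLE σ).continuous.measurable, ?_⟩
  have h : Measure.map (⇑(rotL σ)) (volume : Measure (ℝ × ℝ)) = volume := by
    rw [Measure.map_linearMap_addHaar_eq_smul_addHaar volume (by rw [rotL_det]; norm_num),
      rotL_det]
    simp
  exact h

end Rot

section Polar

lemma exists_polar (a b : ℝ) :
    ∃ r σ : ℝ, a = -(r * Real.sin σ) ∧ b = r * Real.cos σ := by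
  set z : ℂ := ⟨b, -a⟩ with hz
  refine ⟨‖z‖, Complex.arg z, ?_, ?_⟩
  · have := Complex.norm_mul_sin_arg z
    simp only [hz] at this
    linarith [this]
  · have := Complex.norm_mul_cos_arg z
    simp only [hz] at this
    linarith [this]

end Polar

section Transfer

/-- the identification of `EuclideanSpace ℝ (Fin 2)` with `ℝ × ℝ` -/
noncomputable def eqE : EuclideanSpace ℝ (Fin 2) ≃L[ℝ] ℝ × ℝ :=
  (EuclideanSpace.equiv (Fin 2) ℝ).trans (ContinuousLinearEquiv.finTwoArrow ℝ ℝ)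

/-- the same identification as a measurable equivalence -/
noncomputable def eqM : EuclideanSpace ℝ (Fin 2) ≃ᵐ ℝ × ℝ :=
  (MeasurableEquiv.toLp 2 (Fin 2 → ℝ)).symm.trans (MeasurableEquiv.finTwoArrow)

lemma eqM_apply (v : EuclideanSpace ℝ (Fin 2)) : eqM v = (v 0, v 1) := rfl

lemma eqE_apply (v : EuclideanSpace ℝ (Fin 2)) : eqE v = (v 0, v 1) := rfl

lemma eqM_measurePreserving : MeasurePreserving (⇑eqM) volume volume :=
  (volume_preserving_finTwoArrow ℝ).comp
    (EuclideanSpace.volume_preserving_symm_measurableEquiv_toLp (Fin 2))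

/-- realification CLM on Schwartz space -/
noncomputable def ofRealS : 𝓢(EuclideanSpace ℝ (Fin 2), ℝ) →L[ℝ] 𝓢(EuclideanSpace ℝ (Fin 2), ℂ) :=
  SchwartzMap.bilinLeftCLM (ContinuousLinearMap.lsmul ℝ ℝ : ℝ →L[ℝ] ℂ →L[ℝ] ℂ)
    (Function.HasTemperateGrowth.const (1 : ℂ))

lemma ofRealS_apply (f : 𝓢(EuclideanSpace ℝ (Fin 2), ℝ)) (v : EuclideanSpace ℝ (Fin 2)) :
    ofRealS f v = ((f v : ℝ) : ℂ) := by
  show (f v : ℝ) • (1 : ℂ) = ((f v : ℝ) : ℂ)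
  rw [Complex.real_smul, mul_one]

end Transfer

section Main

open RealInnerProductSpace

theorem radon_injective (f : 𝓢(ℝ × ℝ, ℝ)) (hf : ∀ σ μ : ℝ, radon (⇑f) σ μ = 0) :
    ∀ x : ℝ × ℝ, f x = 0 := by
  set g : 𝓢(EuclideanSpace ℝ (Fin 2), ℂ) :=
    ofRealS (SchwartzMap.compCLMOfContinuousLinearEquiv ℝ eqE f) with hgdef
  have hg : ∀ v, g v = ((f (eqE v) : ℝ) : ℂ) := by
    intro v
    rw [hgdef, ofRealS_apply]
    rfl
  have key : ∀ ξ, 𝓕 (⇑g) ξ = 0 := by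
    intro ξ
    obtain ⟨r, σ, h0, h1⟩ := exists_polar (ξ 0) (ξ 1)
    rw [Real.fourier_eq]
    set H : ℝ × ℝ → ℂ :=
      fun y => (𝐞 (-(y.1 * ξ 0 + y.2 * ξ 1)) : ℂ) * ((f y : ℝ) : ℂ) with hH
    have hinner : ∀ v : EuclideanSpace ℝ (Fin 2), ⟪v, ξ⟫ = v 0 * ξ 0 + v 1 * ξ 1 := by
      intro v
      simp [PiLp.inner_apply, Fin.sum_univ_two, RCLike.inner_apply, conj_trivial]
      ring
    have hchar : ∀ p : ℝ × ℝ,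
        ((rotCLE σ) p).1 * ξ 0 + ((rotCLE σ) p).2 * ξ 1 = r * p.2 := by
      intro p
      rw [rotCLE_apply, h0, h1]
      dsimp only
      linear_combination (r * p.2) * Real.sin_sq_add_cos_sq σ
    have hIf : Integrable (fun p : ℝ × ℝ =>
        ((f (p.1 * Real.cos σ - p.2 * Real.sin σ, p.1 * Real.sin σ + p.2 * Real.cos σ) : ℝ) : ℂ))
        volume := by
      have hcomp : Integrable (⇑f ∘ ⇑(rotCLE σ)) volume :=
        ((rotCLE_measurePreserving σ).integrable_comp_emb
          (rotCLE σ).toHomeomorph.measurableEmbedding).2 f.integrable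
      have h2 : Integrable (fun p : ℝ × ℝ =>
          f (p.1 * Real.cos σ - p.2 * Real.sin σ, p.1 * Real.sin σ + p.2 * Real.cos σ))
          volume := by
        refine hcomp.congr (Filter.Eventually.of_forall fun p => ?_)
        simp [Function.comp, rotCLE_apply]
      exact h2.ofReal
    have hIF : Integrable (fun p : ℝ × ℝ => (𝐞 (-(r * p.2)) : ℂ) *
        ((f (p.1 * Real.cos σ - p.2 * Real.sin σ, p.1 * Real.sin σ + p.2 * Real.cos σ) : ℝ) : ℂ))
        volume := by
      refine hIf.bdd_mul (c := 1) ?_ (Filter.Eventually.of_forall fun p => ?_)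
      · apply Continuous.aestronglyMeasurable
        exact continuous_induced_dom.comp (Real.continuous_fourierChar.comp
          (continuous_const.mul continuous_snd).neg)
      · rw [Circle.norm_coe]
    calc
      ∫ v : EuclideanSpace ℝ (Fin 2), 𝐞 (-⟪v, ξ⟫) • g v
          = ∫ v : EuclideanSpace ℝ (Fin 2), H (eqM v) := by
            congr 1
            funext v
            rw [hg, hinner, Circle.smul_def, smul_eq_mul, hH]
            rfl
      _ = ∫ y : ℝ × ℝ, H y := eqM_measurePreserving.integral_comp' H
      _ = ∫ p : ℝ × ℝ, H ((rotCLE σ) p) :=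
            ((rotCLE_measurePreserving σ).integral_comp
              (rotCLE σ).toHomeomorph.measurableEmbedding H).symm
      _ = ∫ p : ℝ × ℝ, (𝐞 (-(r * p.2)) : ℂ) *
            ((f (p.1 * Real.cos σ - p.2 * Real.sin σ,
              p.1 * Real.sin σ + p.2 * Real.cos σ) : ℝ) : ℂ) := by
            congr 1
            funext p
            rw [hH]
            dsimp only
            rw [hchar p, rotCLE_apply]
      _ = ∫ μ' : ℝ, ∫ t : ℝ, (𝐞 (-(r * μ')) : ℂ) *
            ((f (t * Real.cos σ - μ' * Real.sin σ, t * Real.sin σ + μ' * Real.cos σ) : ℝ) : ℂ) := by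
            rw [Measure.volume_eq_prod ℝ ℝ] at hIF ⊢
            exact integral_prod_symm _ hIF
      _ = 0 := by
            have hzero : ∀ μ' : ℝ, ∫ t : ℝ, (𝐞 (-(r * μ')) : ℂ) *
                ((f (t * Real.cos σ - μ' * Real.sin σ, t * Real.sin σ + μ' * Real.cos σ) : ℝ) : ℂ)
                = 0 := by
              intro μ'
              rw [integral_const_mul]
              have h4 : (∫ t : ℝ, ((f (t * Real.cos σ - μ' * Real.sin σ,
                  t * Real.sin σ + μ' * Real.cos σ) : ℝ) : ℂ))
                  = ((radon (⇑f) σ μ' : ℝ) : ℂ) := integral_ofReal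
              rw [h4, hf σ μ']
              simp
            simp only [hzero, integral_zero]
  have hg0 : g = 0 := by
    have h1 : FourierTransform.fourierCLE ℂ 𝓢(EuclideanSpace ℝ (Fin 2), ℂ) g = 0 := by
      apply SchwartzMap.ext
      intro ξ
      rw [FourierTransform.fourierCLE_apply, SchwartzMap.fourier_coe]
      simpa using key ξ
    exact (FourierTransform.fourierCLE ℂ 𝓢(EuclideanSpace ℝ (Fin 2), ℂ)).injective (by simpa using h1)
  intro x
  have hx : g (eqE.symm x) = 0 := by rw [hg0]; rfl
  rw [hg, eqE.apply_symm_apply] at hx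
  exact_mod_cast hx

end Main

section Integrability

lemma radon_integrable (f : SchwartzMap (ℝ × ℝ) ℝ) (σ μ : ℝ) :
    Integrable (fun t : ℝ =>
      f (t * Real.cos σ - μ * Real.sin σ, t * Real.sin σ + μ * Real.cos σ)) volume := by
  obtain ⟨C, hCpos, hC⟩ : ∃ C : ℝ, 0 < C ∧ ∀ y : ℝ × ℝ, (1 + ‖y‖) ^ 2 * ‖f y‖ ≤ C := by
    obtain ⟨C0, hC0pos, h0⟩ := f.decay 0 0
    obtain ⟨C1, hC1pos, h1⟩ := f.decay 1 0
    obtain ⟨C2, hC2pos, h2⟩ := f.decay 2 0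
    refine ⟨C0 + 2 * C1 + C2, by positivity, fun y => ?_⟩
    have e0 := h0 y
    have e1 := h1 y
    have e2 := h2 y
    rw [norm_iteratedFDeriv_zero] at e0 e1 e2
    nlinarith [norm_nonneg y, norm_nonneg (f y)]
  have hbound : ∀ t : ℝ,
      ‖f (t * Real.cos σ - μ * Real.sin σ, t * Real.sin σ + μ * Real.cos σ)‖
        ≤ (2 * C) * ((1 + ‖t‖) ^ 2)⁻¹ := by
    intro t
    set y : ℝ × ℝ := (t * Real.cos σ - μ * Real.sin σ, t * Real.sin σ + μ * Real.cos σ) with hy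
    have hsq : y.1 ^ 2 + y.2 ^ 2 = t ^ 2 + μ ^ 2 := by
      rw [hy]
      dsimp only
      linear_combination (t ^ 2 + μ ^ 2) * Real.sin_sq_add_cos_sq σ
    have hn1 : |y.1| ≤ ‖y‖ := by
      rw [Prod.norm_def, Real.norm_eq_abs, Real.norm_eq_abs]
      exact le_max_left _ _
    have hn2 : |y.2| ≤ ‖y‖ := by
      rw [Prod.norm_def, Real.norm_eq_abs, Real.norm_eq_abs]
      exact le_max_right _ _
    have hnn : (0 : ℝ) ≤ ‖y‖ := norm_nonneg y
    have ht2 : t ^ 2 ≤ 2 * ‖y‖ ^ 2 := by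
      nlinarith [sq_abs y.1, sq_abs y.2, abs_nonneg y.1, abs_nonneg y.2, sq_nonneg μ]
    have hteq : ‖t‖ = |t| := Real.norm_eq_abs t
    have hcmp : (1 + ‖t‖) ^ 2 ≤ 2 * (1 + ‖y‖) ^ 2 := by
      rw [hteq]
      have h2t : 2 * |t| ≤ 3 * ‖y‖ := by
        nlinarith [sq_abs t, abs_nonneg t, ht2]
      nlinarith [sq_abs t, abs_nonneg t]
    have hfy : (1 + ‖y‖) ^ 2 * ‖f y‖ ≤ C := hC y
    have hpos : (0 : ℝ) < (1 + ‖t‖) ^ 2 := by positivity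
    rw [← div_eq_mul_inv, le_div_iff₀ hpos]
    nlinarith [norm_nonneg (f y), sq_nonneg (1 + ‖y‖)]
  have hmaj : Integrable (fun t : ℝ => (2 * C) * ((1 + ‖t‖) ^ 2)⁻¹) volume := by
    have hint : Integrable (fun t : ℝ => (1 + ‖t‖) ^ (-(2 : ℝ))) volume := by
      apply integrable_one_add_norm
      simp
    have heq : (fun t : ℝ => (1 + ‖t‖) ^ (-(2 : ℝ))) = fun t : ℝ => ((1 + ‖t‖) ^ 2)⁻¹ := by
      funext t
      rw [Real.rpow_neg (by positivity), show ((2 : ℝ)) = ((2 : ℕ) : ℝ) by norm_num,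
        Real.rpow_natCast]
    rw [heq] at hint
    exact hint.const_mul _
  refine hmaj.mono' ?_ (Filter.Eventually.of_forall hbound)
  exact (f.continuous.comp (by continuity)).aestronglyMeasurable

end Integrability

/-- A function `f : ℝ² → ℝ` is axisymmetric if it is invariant under all rotations. -/
def Axisym (f : ℝ × ℝ → ℝ) : Prop :=
  ∀ τ x₁ x₂ : ℝ,
    f (x₁ * Real.cos τ - x₂ * Real.sin τ, x₁ * Real.sin τ + x₂ * Real.cos τ) = f (x₁, x₂)

/-- The Radon transform is injective on Schwartz functions: if the Radon transform of a
Schwartz function on ℝ² vanishes identically then the function is identically zero.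
In particular, the Radon transform is one-to-one on axisymmetric Schwartz functions. -/
theorem statement7 :
    (∀ f : SchwartzMap (ℝ × ℝ) ℝ,
      (∀ σ μ : ℝ, radon (⇑f) σ μ = 0) → ∀ x : ℝ × ℝ, f x = 0) ∧
    (∀ f g : SchwartzMap (ℝ × ℝ) ℝ, Axisym ⇑f → Axisym ⇑g →
      (∀ σ μ : ℝ, radon (⇑f) σ μ = radon (⇑g) σ μ) → f = g) := by
  constructor
  · exact radon_injective
  · intro f g _ _ h
    have hint : ∀ σ μ : ℝ, radon (⇑(f - g)) σ μ = 0 := by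
      intro σ μ
      have hfI := radon_integrable f σ μ
      have hgI := radon_integrable g σ μ
      rw [radon]
      simp only [SchwartzMap.sub_apply]
      rw [integral_sub hfI hgI, sub_eq_zero]
      exact h σ μ
    have hz := radon_injective (f - g) hint
    apply SchwartzMap.ext
    intro x
    have hx := hz x
    rw [SchwartzMap.sub_apply, sub_eq_zero] at hx
    exact hx
end

section
/- (Sokhotski–Plemelj boundary value formula.) Let h : ℝ → ℂ be a Schwartz function and let x ∈ ℝ. Then the principal value L = pv∫ h(μ)/(μ−x) dμ exists (i.e. the limit as δ → 0⁺ of ∫_{|μ−x|>δ} h(μ)/(μ−x) dμ exists), and the Cauchy integrals from the upper half-plane converge to it with an extra residue term: lim_{ε→0⁺} ∫_ℝ h(μ)/(μ − x − iε) dμ = L + iπ h(x). Equivalently, the function G(ξ) = (1/πi)∫_ℝ h(μ)/(μ−ξ) dμ, defined for Im ξ > 0, extends continuously to the real axis with boundary value (1/πi)·pv∫ h(μ)/(μ−x) dμ + h(x). -/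
open Real MeasureTheory Filter Topology Set

namespace SPaux

lemma norm_coe_sub (μ x : ℝ) : ‖(μ:ℂ) - (x:ℂ)‖ = |μ - x| := by
  rw [← Complex.ofReal_sub, Complex.norm_real, Real.norm_eq_abs]

lemma im_den (μ x ε : ℝ) : ((μ:ℂ) - x - ε*Complex.I).im = -ε := by simp

lemma abs_sub_le_norm_den (μ x ε : ℝ) : |μ - x| ≤ ‖(μ:ℂ) - x - ε*Complex.I‖ := by
  have h := Complex.abs_re_le_norm ((μ:ℂ) - x - ε*Complex.I)
  have hre : ((μ:ℂ) - x - ε*Complex.I).re = μ - x := by simp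
  rw [hre] at h
  exact h

lemma eps_le_norm_den (μ x ε : ℝ) : |ε| ≤ ‖(μ:ℂ) - x - ε*Complex.I‖ := by
  have h := Complex.abs_im_le_norm ((μ:ℂ) - x - ε*Complex.I)
  rw [im_den, abs_neg] at h
  exact h

lemma den_ne_zero (μ x : ℝ) {ε : ℝ} (hε : ε ≠ 0) : (μ:ℂ) - x - ε*Complex.I ≠ 0 := by
  intro h0
  have h := im_den μ x ε
  rw [h0] at h
  simp only [Complex.zero_im] at h
  exact hε (by linarith)

lemma lip (h : SchwartzMap ℝ ℂ) : ∃ C : ℝ, 0 ≤ C ∧ ∀ a b : ℝ, ‖h a - h b‖ ≤ C * |a - b| := by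
  obtain ⟨C, hC0, hC⟩ := (SchwartzMap.derivCLM ℝ ℂ h).decay 0 0
  refine ⟨C, hC0.le, fun a b => ?_⟩
  have hd : ∀ t : ℝ, ‖deriv (⇑h) t‖₊ ≤ C.toNNReal := by
    intro t
    have ht := hC t
    simp only [pow_zero, one_mul, norm_iteratedFDeriv_zero, SchwartzMap.derivCLM_apply] at ht
    rw [← NNReal.coe_le_coe, coe_nnnorm, Real.coe_toNNReal _ hC0.le]
    exact ht
  have hl := lipschitzWith_of_nnnorm_deriv_le h.differentiable hd
  have hd2 := hl.dist_le_mul a b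
  rw [dist_eq_norm, Real.dist_eq] at hd2
  rwa [Real.coe_toNNReal _ hC0.le] at hd2

lemma bdd (h : SchwartzMap ℝ ℂ) : ∃ M : ℝ, 0 ≤ M ∧ ∀ t, ‖h t‖ ≤ M := by
  obtain ⟨M, hM0, hM⟩ := h.decay 0 0
  exact ⟨M, hM0.le, fun t => by simpa [norm_iteratedFDeriv_zero] using hM t⟩

lemma shift_inv (x a b : ℝ) : ∫ μ in a..b, (μ - x)⁻¹ = ∫ t in (a-x)..(b-x), t⁻¹ :=
  intervalIntegral.integral_comp_sub_right (fun t => t⁻¹) x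

lemma cancel (x : ℝ) {δ : ℝ} (h0 : 0 < δ) (h1 : δ < 1) :
    ∫ μ in (Ioo (x-1) (x+1) ∩ {μ : ℝ | δ < |μ - x|}), ((μ:ℂ) - x)⁻¹ = 0 := by
  have hset : Ioo (x-1) (x+1) ∩ {μ : ℝ | δ < |μ - x|}
      = Ioo (x-1) (x-δ) ∪ Ioo (x+δ) (x+1) := by
    ext μ
    simp only [mem_inter_iff, mem_Ioo, mem_setOf_eq, mem_union, lt_abs]
    constructor
    · rintro ⟨⟨ha, hb⟩, (hc | hc)⟩
      · right; constructor <;> linarith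
      · left; constructor <;> linarith
    · rintro (⟨ha, hb⟩ | ⟨ha, hb⟩)
      · exact ⟨⟨by linarith, by linarith⟩, Or.inr (by linarith)⟩
      · exact ⟨⟨by linarith, by linarith⟩, Or.inl (by linarith)⟩
  rw [hset]
  have hmeas : Measurable fun μ : ℝ => ((μ:ℂ) - x)⁻¹ :=
    (Complex.measurable_ofReal.sub measurable_const).inv
  have hbd : ∀ (a b : ℝ), (∀ μ ∈ Ioo a b, δ ≤ |μ - x|) →
      IntegrableOn (fun μ : ℝ => ((μ:ℂ) - x)⁻¹) (Ioo a b) := by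
    intro a b hab
    refine Measure.integrableOn_of_bounded measure_Ioo_lt_top.ne hmeas.aestronglyMeasurable
      (M := δ⁻¹) ?_
    rw [ae_restrict_iff' measurableSet_Ioo]
    filter_upwards with μ hμ
    rw [norm_inv, norm_coe_sub]
    exact inv_anti₀ h0 (hab μ hμ)
  have hi1 : IntegrableOn (fun μ : ℝ => ((μ:ℂ) - x)⁻¹) (Ioo (x-1) (x-δ)) := by
    refine hbd _ _ fun μ hμ => ?_
    rw [abs_sub_comm, le_abs]
    left; linarith [hμ.2]
  have hi2 : IntegrableOn (fun μ : ℝ => ((μ:ℂ) - x)⁻¹) (Ioo (x+δ) (x+1)) := by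
    refine hbd _ _ fun μ hμ => ?_
    rw [le_abs]; left; linarith [hμ.1]
  have hdisj : Disjoint (Ioo (x-1) (x-δ)) (Ioo (x+δ) (x+1)) := by
    rw [Set.disjoint_left]
    rintro μ ⟨_, hb⟩ ⟨hc, _⟩
    linarith
  rw [setIntegral_union hdisj measurableSet_Ioo hi1 hi2]
  have hIoo : ∀ a b : ℝ, a ≤ b →
      ∫ μ in Ioo a b, ((μ:ℂ) - x)⁻¹ = Complex.ofReal (∫ μ in a..b, (μ - x)⁻¹) := by
    intro a b hab
    have hcongr : ∀ μ : ℝ, ((μ:ℂ) - x)⁻¹ = (((μ - x)⁻¹ : ℝ) : ℂ) := by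
      intro μ; push_cast; ring
    simp only [hcongr]
    rw [← integral_Ioc_eq_integral_Ioo, ← intervalIntegral.integral_of_le hab,
      intervalIntegral.integral_ofReal]
  rw [hIoo _ _ (by linarith), hIoo _ _ (by linarith), shift_inv, shift_inv]
  have b1 : x - 1 - x = -1 := by ring
  have b2 : x - δ - x = -δ := by ring
  have b3 : x + δ - x = δ := by ring
  have b4 : x + 1 - x = 1 := by ring
  rw [b1, b2, b3, b4]
  have hm1 : (0:ℝ) ∉ Set.uIcc (-1) (-δ) := by
    rw [Set.mem_uIcc]; push_neg
    exact ⟨fun _ => by linarith, fun _ => by linarith⟩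
  have hm2 : (0:ℝ) ∉ Set.uIcc δ 1 := by
    rw [Set.mem_uIcc]; push_neg
    exact ⟨fun _ => by linarith, fun _ => by linarith⟩
  rw [integral_inv hm1, integral_inv hm2]
  rw [neg_div_neg_eq, div_one, one_div, Real.log_inv]
  push_cast
  ring

lemma tendsto_den (c : ℂ) : Tendsto (fun ε : ℝ => c - ε*Complex.I) (𝓝[>] 0) (𝓝 c) := by
  have hc : Continuous fun ε : ℝ => c - ε*Complex.I :=
    continuous_const.sub (Complex.continuous_ofReal.mul continuous_const)
  have h0 : Tendsto (fun ε : ℝ => c - ε*Complex.I) (𝓝 0) (𝓝 (c - (0:ℝ)*Complex.I)) :=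
    hc.tendsto 0
  simp only [Complex.ofReal_zero, zero_mul, sub_zero] at h0
  exact h0.mono_left nhdsWithin_le_nhds

lemma cauchyInt (x : ℝ) {ε : ℝ} (hε : 0 < ε) :
    ∫ μ in Ioo (x-1) (x+1), ((μ:ℂ) - x - ε*Complex.I)⁻¹
      = Complex.log (1 - ε*Complex.I) - Complex.log (-1 - ε*Complex.I) := by
  have hle : x - 1 ≤ x + 1 := by linarith
  rw [← integral_Ioc_eq_integral_Ioo, ← intervalIntegral.integral_of_le hle]
  have hder : ∀ t ∈ Set.uIcc (x-1) (x+1),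
      HasDerivAt (fun t : ℝ => Complex.log ((t:ℂ) - x - ε*Complex.I))
        (((t:ℂ) - x - ε*Complex.I)⁻¹) t := by
    intro t _
    have hz : ((t:ℂ) - x - ε*Complex.I) ∈ Complex.slitPlane := by
      rw [Complex.mem_slitPlane_iff]
      right
      have h : ((t:ℂ) - x - ε*Complex.I).im = -ε := by simp
      rw [h]
      simpa using hε.ne'
    have h1 : HasDerivAt (fun w : ℂ => Complex.log (w - x - ε*Complex.I))
        (((t:ℂ) - x - ε*Complex.I)⁻¹) ((t:ℝ):ℂ) := by
      have h2 := (Complex.hasDerivAt_log hz).comp ((t:ℝ):ℂ)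
        (((hasDerivAt_id ((t:ℝ):ℂ)).sub_const ((x:ℂ))).sub_const (ε*Complex.I))
      simpa [Function.comp_def] using h2
    exact h1.comp_ofReal
  have hcont : IntervalIntegrable (fun t : ℝ => ((t:ℂ) - x - ε*Complex.I)⁻¹)
      volume (x-1) (x+1) := by
    apply Continuous.intervalIntegrable
    apply Continuous.inv₀
    · exact (Complex.continuous_ofReal.sub continuous_const).sub continuous_const
    · exact fun t => den_ne_zero t x hε.ne'
  rw [intervalIntegral.integral_eq_sub_of_hasDerivAt hder hcont]
  have e1 : ((x+1:ℝ):ℂ) - x - ε*Complex.I = 1 - ε*Complex.I := by push_cast; ring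
  have e2 : ((x-1:ℝ):ℂ) - x - ε*Complex.I = -1 - ε*Complex.I := by push_cast; ring
  rw [e1, e2]

lemma tendstoCauchy (x : ℝ) :
    Tendsto (fun ε : ℝ => ∫ μ in Ioo (x-1) (x+1), ((μ:ℂ) - x - ε*Complex.I)⁻¹)
      (𝓝[>] 0) (𝓝 ((Real.pi : ℂ) * Complex.I)) := by
  have h1 : Tendsto (fun ε : ℝ => Complex.log (1 - ε*Complex.I)) (𝓝[>] 0) (𝓝 0) := by
    have hc : ContinuousAt Complex.log 1 :=
      continuousAt_clog (by rw [Complex.mem_slitPlane_iff]; left; simp)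
    have ht : Tendsto (fun ε : ℝ => (1:ℂ) - ε*Complex.I) (𝓝[>] 0) (𝓝 1) := tendsto_den 1
    have := hc.tendsto.comp ht
    simpa [Complex.log_one, Function.comp_def] using this
  have h2 : Tendsto (fun ε : ℝ => Complex.log (-1 - ε*Complex.I)) (𝓝[>] 0)
      (𝓝 (-((Real.pi : ℂ) * Complex.I))) := by
    have hlog := Complex.tendsto_log_nhdsWithin_im_neg_of_re_neg_of_im_zero
      (z := -1) (by norm_num) (by norm_num)
    have ht : Tendsto (fun ε : ℝ => (-1:ℂ) - ε*Complex.I) (𝓝[>] 0)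
        (𝓝[{z : ℂ | z.im < 0}] (-1)) := by
      rw [tendsto_nhdsWithin_iff]
      constructor
      · exact tendsto_den (-1)
      · filter_upwards [self_mem_nhdsWithin] with ε (hε : 0 < ε)
        show ((-1:ℂ) - ε*Complex.I).im < 0
        have him : ((-1:ℂ) - ε*Complex.I).im = -ε := by simp
        rw [him]
        linarith
    have h3 := hlog.comp ht
    have h4 : Real.log ‖(-1:ℂ)‖ = 0 := by simp
    rw [Function.comp_def, h4] at h3
    simpa using h3
  have := h1.sub h2
  rw [zero_sub, neg_neg] at this
  apply this.congr'
  filter_upwards [self_mem_nhdsWithin] with ε (hε : 0 < ε)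
  exact (cauchyInt x hε).symm

lemma g_bound (h : SchwartzMap ℝ ℂ) (x μ : ℝ) {C : ℝ} (hC0 : 0 ≤ C)
    (hC : ∀ a b : ℝ, ‖h a - h b‖ ≤ C * |a - b|) (z : ℂ) (hz : |μ - x| ≤ ‖z‖) :
    ‖(h μ - h x) / z‖ ≤ C := by
  rw [norm_div]
  rcases eq_or_lt_of_le (norm_nonneg z) with h0 | h0
  · rw [← h0, div_zero]; exact hC0
  · rw [div_le_iff₀ h0]
    calc ‖h μ - h x‖ ≤ C * |μ - x| := hC μ x
    _ ≤ C * ‖z‖ := mul_le_mul_of_nonneg_left hz hC0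

lemma mS (x : ℝ) (δ : ℝ) : MeasurableSet (Ioo (x-1) (x+1) ∩ {μ : ℝ | δ < |μ - x|}) :=
  measurableSet_Ioo.inter
    (measurableSet_lt measurable_const ((continuous_id.sub continuous_const).abs.measurable))

lemma mTinf (x : ℝ) : MeasurableSet {μ : ℝ | 1 ≤ |μ - x|} :=
  measurableSet_le measurable_const ((continuous_id.sub continuous_const).abs.measurable)

noncomputable def Aint (h : SchwartzMap ℝ ℂ) (x : ℝ) : ℂ :=
  ∫ μ in {μ : ℝ | 1 ≤ |μ - x|}, h μ / ((μ:ℂ) - x)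

noncomputable def Bint (h : SchwartzMap ℝ ℂ) (x : ℝ) : ℂ :=
  ∫ μ in Ioo (x-1) (x+1), (h μ - h x) / ((μ:ℂ) - x)

lemma part1 (h : SchwartzMap ℝ ℂ) (x : ℝ) :
    Tendsto (fun δ : ℝ => ∫ μ in {μ : ℝ | δ < |μ - x|}, h μ / ((μ : ℂ) - (x : ℂ)))
      (𝓝[>] 0) (𝓝 (Aint h x + Bint h x)) := by
  obtain ⟨C, hC0, hC⟩ := lip h
  obtain ⟨M, hM0, hM⟩ := bdd h
  set g : ℝ → ℂ := fun μ => (h μ - h x) / ((μ:ℂ) - x) with hg_def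
  have hgmeas : Measurable g := by
    rw [hg_def]
    simp only [div_eq_mul_inv]
    exact (h.continuous.measurable.sub measurable_const).mul
      ((Complex.measurable_ofReal.sub measurable_const).inv)
  have hgbd : ∀ μ : ℝ, ‖g μ‖ ≤ C := fun μ =>
    g_bound h x μ hC0 hC _ (le_of_eq (norm_coe_sub μ x).symm)
  have hfmeas : Measurable fun μ : ℝ => h μ / ((μ:ℂ) - x) := by
    simp only [div_eq_mul_inv]
    exact h.continuous.measurable.mul ((Complex.measurable_ofReal.sub measurable_const).inv)
  have hgint : IntegrableOn g (Ioo (x-1) (x+1)) :=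
    Measure.integrableOn_of_bounded measure_Ioo_lt_top.ne hgmeas.aestronglyMeasurable
      (ae_of_all _ hgbd)
  have key : ∀ δ : ℝ, δ ∈ Ioo (0:ℝ) 1 →
      ∫ μ in {μ : ℝ | δ < |μ - x|}, h μ / ((μ:ℂ) - x)
        = Aint h x + ∫ μ in (Ioo (x-1) (x+1) ∩ {μ : ℝ | δ < |μ - x|}), g μ := by
    rintro δ ⟨hδ0, hδ1⟩
    have hsplit : {μ : ℝ | δ < |μ - x|}
        = {μ : ℝ | 1 ≤ |μ - x|} ∪ (Ioo (x-1) (x+1) ∩ {μ : ℝ | δ < |μ - x|}) := by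
      ext μ
      simp only [mem_setOf_eq, mem_union, mem_inter_iff, mem_Ioo]
      constructor
      · intro hμ
        by_cases h1 : 1 ≤ |μ - x|
        · exact Or.inl h1
        · push_neg at h1
          rw [abs_lt] at h1
          exact Or.inr ⟨⟨by linarith [h1.1], by linarith [h1.2]⟩, hμ⟩
      · rintro (h1 | ⟨_, h2⟩)
        · linarith
        · exact h2
    have hfinf : IntegrableOn (fun μ : ℝ => h μ / ((μ:ℂ) - x)) {μ : ℝ | 1 ≤ |μ - x|} := by
      apply Integrable.mono h.integrable.restrict hfmeas.aestronglyMeasurable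
      rw [ae_restrict_iff' (mTinf x)]
      apply ae_of_all
      intro μ hμ
      rw [norm_div, norm_coe_sub]
      exact div_le_self (norm_nonneg _) hμ
    have hfS : IntegrableOn (fun μ : ℝ => h μ / ((μ:ℂ) - x))
        (Ioo (x-1) (x+1) ∩ {μ : ℝ | δ < |μ - x|}) := by
      apply Measure.integrableOn_of_bounded
        (ne_of_lt (lt_of_le_of_lt (measure_mono inter_subset_left) measure_Ioo_lt_top))
        hfmeas.aestronglyMeasurable (M := M * δ⁻¹)
      rw [ae_restrict_iff' (mS x δ)]
      apply ae_of_all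
      intro μ hμ
      rw [norm_div, norm_coe_sub, div_eq_mul_inv]
      exact mul_le_mul (hM μ) (inv_anti₀ hδ0 hμ.2.le) (inv_nonneg.2 (abs_nonneg _)) hM0
    have hdisj : Disjoint {μ : ℝ | 1 ≤ |μ - x|}
        (Ioo (x-1) (x+1) ∩ {μ : ℝ | δ < |μ - x|}) := by
      rw [Set.disjoint_left]
      rintro μ h1 ⟨h2, _⟩
      rw [mem_setOf_eq] at h1
      rw [mem_Ioo] at h2
      have : |μ - x| < 1 := abs_lt.2 ⟨by linarith [h2.1], by linarith [h2.2]⟩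
      linarith
    conv_lhs => rw [hsplit]
    rw [setIntegral_union hdisj (mS x δ) hfinf hfS]
    rw [Aint]
    congr 1
    have hfg : ∀ μ : ℝ, h μ / ((μ:ℂ) - x) = g μ + h x * ((μ:ℂ) - x)⁻¹ := by
      intro μ
      rw [hg_def]
      simp only [div_eq_mul_inv]
      ring
    rw [setIntegral_congr_fun (mS x δ) (fun μ _ => hfg μ)]
    have hinvS : IntegrableOn (fun μ : ℝ => ((μ:ℂ) - x)⁻¹)
        (Ioo (x-1) (x+1) ∩ {μ : ℝ | δ < |μ - x|}) := by
      apply Measure.integrableOn_of_bounded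
        (ne_of_lt (lt_of_le_of_lt (measure_mono inter_subset_left) measure_Ioo_lt_top))
        ((Complex.measurable_ofReal.sub measurable_const).inv).aestronglyMeasurable
        (M := δ⁻¹)
      rw [ae_restrict_iff' (mS x δ)]
      apply ae_of_all
      intro μ hμ
      show ‖((μ:ℂ) - x)⁻¹‖ ≤ δ⁻¹
      rw [norm_inv, norm_coe_sub]
      exact inv_anti₀ hδ0 hμ.2.le
    rw [integral_add (hgint.mono_set inter_subset_left) (hinvS.const_mul (h x)),
      integral_const_mul, cancel x hδ0 hδ1, mul_zero, add_zero]
  have hB : Tendsto (fun δ : ℝ => ∫ μ in (Ioo (x-1) (x+1) ∩ {μ : ℝ | δ < |μ - x|}), g μ)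
      (𝓝[>] 0) (𝓝 (Bint h x)) := by
    rw [tendsto_iff_norm_sub_tendsto_zero]
    apply squeeze_zero' (g := fun δ : ℝ => C * (2*δ))
    · filter_upwards with δ
      positivity
    · filter_upwards [Ioo_mem_nhdsGT one_pos] with δ hδ
      obtain ⟨hδ0, hδ1⟩ := hδ
      have hdiffint := MeasureTheory.integral_diff (mS x δ) hgint
        (inter_subset_left : Ioo (x-1) (x+1) ∩ {μ : ℝ | δ < |μ - x|} ⊆ Ioo (x-1) (x+1))
        (f := g)
      rw [norm_sub_rev]
      have hBeq : Bint h x = ∫ μ in Ioo (x-1) (x+1), g μ := rfl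
      rw [hBeq, ← hdiffint]
      have hsub : Ioo (x-1) (x+1) \ (Ioo (x-1) (x+1) ∩ {μ : ℝ | δ < |μ - x|})
          ⊆ Icc (x-δ) (x+δ) := by
        rintro μ ⟨h1, h2⟩
        simp only [mem_inter_iff, not_and, mem_setOf_eq] at h2
        have h3 : ¬ δ < |μ - x| := h2 h1
        push_neg at h3
        rw [abs_le] at h3
        exact ⟨by linarith [h3.1], by linarith [h3.2]⟩
      have hvol : volume (Ioo (x-1) (x+1) \ (Ioo (x-1) (x+1) ∩ {μ : ℝ | δ < |μ - x|}))
          ≤ ENNReal.ofReal (2*δ) := by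
        refine (measure_mono hsub).trans ?_
        rw [Real.volume_Icc]
        apply le_of_eq
        congr 1
        ring
      have hvlt : volume (Ioo (x-1) (x+1) \ (Ioo (x-1) (x+1) ∩ {μ : ℝ | δ < |μ - x|})) < ⊤ :=
        lt_of_le_of_lt hvol ENNReal.ofReal_lt_top
      calc ‖∫ μ in Ioo (x-1) (x+1) \ (Ioo (x-1) (x+1) ∩ {μ : ℝ | δ < |μ - x|}), g μ‖
          ≤ C * (volume (Ioo (x-1) (x+1) \ (Ioo (x-1) (x+1) ∩ {μ : ℝ | δ < |μ - x|}))).toReal :=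
            norm_setIntegral_le_of_norm_le_const hvlt (fun μ _ => hgbd μ)
        _ ≤ C * (2*δ) := by
            apply mul_le_mul_of_nonneg_left _ hC0
            exact ENNReal.toReal_le_of_le_ofReal (by positivity) hvol
    · have hcont : Continuous fun δ : ℝ => C * (2*δ) := by continuity
      have h0 := (hcont.tendsto 0).mono_left (nhdsWithin_le_nhds : 𝓝[>] (0:ℝ) ≤ 𝓝 0)
      simpa using h0
  have hfinal := (tendsto_const_nhds (x := Aint h x) (f := 𝓝[>] (0:ℝ))).add hB
  apply hfinal.congr'
  filter_upwards [Ioo_mem_nhdsGT one_pos] with δ hδ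
  exact (key δ hδ).symm

lemma part2 (h : SchwartzMap ℝ ℂ) (x : ℝ) :
    Tendsto (fun ε : ℝ => ∫ μ : ℝ, h μ / ((μ : ℂ) - (x : ℂ) - (ε : ℂ) * Complex.I))
      (𝓝[>] 0) (𝓝 (Aint h x + Bint h x + (Real.pi : ℂ) * Complex.I * h x)) := by
  obtain ⟨C, hC0, hC⟩ := lip h
  have hmden : ∀ ε : ℝ, Measurable fun μ : ℝ => ((μ:ℂ) - x - ε*Complex.I)⁻¹ := fun ε =>
    ((Complex.measurable_ofReal.sub measurable_const).sub measurable_const).inv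
  have hfmeas : ∀ ε : ℝ, Measurable fun μ : ℝ => h μ / ((μ:ℂ) - x - ε*Complex.I) := by
    intro ε
    simp only [div_eq_mul_inv]
    exact h.continuous.measurable.mul (hmden ε)
  have hgmeas : ∀ ε : ℝ, Measurable fun μ : ℝ => (h μ - h x) / ((μ:ℂ) - x - ε*Complex.I) := by
    intro ε
    simp only [div_eq_mul_inv]
    exact (h.continuous.measurable.sub measurable_const).mul (hmden ε)
  -- a.e. μ ≠ x
  have hae : ∀ᵐ μ : ℝ, μ ≠ x := by
    have hs : {μ : ℝ | ¬ μ ≠ x} = {x} := by ext μ; simp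
    rw [MeasureTheory.ae_iff, hs]
    exact measure_singleton x
  -- Term 1
  have hT1 : Tendsto (fun ε : ℝ => ∫ μ in {μ : ℝ | 1 ≤ |μ - x|},
      h μ / ((μ:ℂ) - x - ε*Complex.I)) (𝓝[>] 0) (𝓝 (Aint h x)) := by
    refine tendsto_integral_filter_of_dominated_convergence (fun μ => ‖h μ‖)
      (Eventually.of_forall fun ε => (hfmeas ε).aestronglyMeasurable) ?_ ?_ ?_
    · apply Eventually.of_forall
      intro ε
      rw [ae_restrict_iff' (mTinf x)]
      apply ae_of_all
      intro μ hμ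
      rw [mem_setOf_eq] at hμ
      rw [norm_div]
      apply div_le_self (norm_nonneg _)
      exact le_trans hμ (abs_sub_le_norm_den μ x ε)
    · exact h.integrable.norm.restrict
    · rw [ae_restrict_iff' (mTinf x)]
      apply ae_of_all
      intro μ hμ
      rw [mem_setOf_eq] at hμ
      have hne : (μ:ℂ) - x ≠ 0 := by
        rw [← norm_ne_zero_iff, norm_coe_sub]
        intro h0
        rw [h0] at hμ
        linarith
      exact tendsto_const_nhds.div (tendsto_den ((μ:ℂ) - x)) hne
  -- Term 2
  have hT2 : Tendsto (fun ε : ℝ => ∫ μ in Ioo (x-1) (x+1),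
      (h μ - h x) / ((μ:ℂ) - x - ε*Complex.I)) (𝓝[>] 0) (𝓝 (Bint h x)) := by
    refine tendsto_integral_filter_of_dominated_convergence (fun _ => C)
      (Eventually.of_forall fun ε => (hgmeas ε).aestronglyMeasurable) ?_ ?_ ?_
    · apply Eventually.of_forall
      intro ε
      apply ae_of_all
      intro μ
      exact g_bound h x μ hC0 hC _ (abs_sub_le_norm_den μ x ε)
    · exact (integrableOn_const measure_Ioo_lt_top.ne)
    · refine ae_restrict_of_ae ?_
      filter_upwards [hae] with μ hμ
      have hne : (μ:ℂ) - x ≠ 0 := by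
        rw [← norm_ne_zero_iff, norm_coe_sub]
        simpa [sub_eq_zero] using hμ
      exact tendsto_const_nhds.div (tendsto_den ((μ:ℂ) - x)) hne
  -- Term 3
  have hT3 : Tendsto (fun ε : ℝ => h x * ∫ μ in Ioo (x-1) (x+1),
      ((μ:ℂ) - x - ε*Complex.I)⁻¹) (𝓝[>] 0) (𝓝 (h x * ((Real.pi : ℂ) * Complex.I))) :=
    (tendstoCauchy x).const_mul (h x)
  have hsum := hT1.add (hT2.add hT3)
  have hlim : Aint h x + (Bint h x + h x * ((Real.pi : ℂ) * Complex.I))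
      = Aint h x + Bint h x + (Real.pi : ℂ) * Complex.I * h x := by ring
  rw [hlim] at hsum
  apply hsum.congr'
  filter_upwards [self_mem_nhdsWithin] with ε (hε : 0 < ε)
  -- key decomposition for fixed ε > 0
  have hint : Integrable (fun μ : ℝ => h μ / ((μ:ℂ) - x - ε*Complex.I)) := by
    apply Integrable.mono (h.integrable.smul (ε⁻¹ : ℝ)) (hfmeas ε).aestronglyMeasurable
    apply ae_of_all
    intro μ
    rw [Pi.smul_apply, norm_smul, norm_div, Real.norm_eq_abs,
      abs_of_pos (inv_pos.2 hε), div_eq_mul_inv, mul_comm]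
    apply mul_le_mul_of_nonneg_right _ (norm_nonneg _)
    apply inv_anti₀ hε
    calc ε = |ε| := (abs_of_pos hε).symm
    _ ≤ _ := eps_le_norm_den μ x ε
  have huniv : (univ : Set ℝ) = {μ : ℝ | 1 ≤ |μ - x|} ∪ Ioo (x-1) (x+1) := by
    ext μ
    simp only [mem_univ, true_iff, mem_union, mem_setOf_eq, mem_Ioo]
    by_cases h1 : 1 ≤ |μ - x|
    · exact Or.inl h1
    · push_neg at h1
      rw [abs_lt] at h1
      exact Or.inr ⟨by linarith [h1.1], by linarith [h1.2]⟩
  have hdisj : Disjoint {μ : ℝ | 1 ≤ |μ - x|} (Ioo (x-1) (x+1)) := by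
    rw [Set.disjoint_left]
    rintro μ h1 h2
    rw [mem_setOf_eq] at h1
    rw [mem_Ioo] at h2
    have : |μ - x| < 1 := abs_lt.2 ⟨by linarith [h2.1], by linarith [h2.2]⟩
    linarith
  have hkey : (∫ μ : ℝ, h μ / ((μ:ℂ) - x - ε*Complex.I))
      = (∫ μ in {μ : ℝ | 1 ≤ |μ - x|}, h μ / ((μ:ℂ) - x - ε*Complex.I))
        + ∫ μ in Ioo (x-1) (x+1), h μ / ((μ:ℂ) - x - ε*Complex.I) := by
    conv_lhs => rw [← setIntegral_univ, huniv]
    exact setIntegral_union hdisj measurableSet_Ioo hint.integrableOn hint.integrableOn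
  rw [hkey]
  congr 1
  have hfg : ∀ μ : ℝ, h μ / ((μ:ℂ) - x - ε*Complex.I)
      = (h μ - h x) / ((μ:ℂ) - x - ε*Complex.I) + h x * ((μ:ℂ) - x - ε*Complex.I)⁻¹ := by
    intro μ
    simp only [div_eq_mul_inv]
    ring
  have hgi : IntegrableOn (fun μ : ℝ => (h μ - h x) / ((μ:ℂ) - x - ε*Complex.I))
      (Ioo (x-1) (x+1)) :=
    Measure.integrableOn_of_bounded measure_Ioo_lt_top.ne (hgmeas ε).aestronglyMeasurable
      (ae_of_all _ fun μ => g_bound h x μ hC0 hC _ (abs_sub_le_norm_den μ x ε))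
  have hii : IntegrableOn (fun μ : ℝ => ((μ:ℂ) - x - ε*Complex.I)⁻¹) (Ioo (x-1) (x+1)) := by
    apply Measure.integrableOn_of_bounded measure_Ioo_lt_top.ne
      (hmden ε).aestronglyMeasurable (M := ε⁻¹)
    apply ae_of_all
    intro μ
    rw [norm_inv]
    apply inv_anti₀ hε
    calc ε = |ε| := (abs_of_pos hε).symm
    _ ≤ _ := eps_le_norm_den μ x ε
  rw [setIntegral_congr_fun measurableSet_Ioo (fun μ _ => hfg μ),
    integral_add hgi (hii.const_mul (h x)), integral_const_mul]

end SPaux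

open Real MeasureTheory Filter Topology

/-- Sokhotski–Plemelj boundary value formula: for a Schwartz function `h : ℝ → ℂ` and
`x ∈ ℝ`, the principal value `L = pv∫ h(μ)/(μ−x) dμ` exists, and the Cauchy integrals
from the upper half-plane converge to `L + iπ h(x)` as `ε → 0⁺`. -/
theorem statement8 (h : SchwartzMap ℝ ℂ) (x : ℝ) :
    ∃ L : ℂ,
      Tendsto (fun δ : ℝ => ∫ μ in {μ : ℝ | δ < |μ - x|}, h μ / ((μ : ℂ) - (x : ℂ)))
        (𝓝[>] 0) (𝓝 L) ∧
      Tendsto (fun ε : ℝ =>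
          ∫ μ : ℝ, h μ / ((μ : ℂ) - (x : ℂ) - (ε : ℂ) * Complex.I))
        (𝓝[>] 0) (𝓝 (L + (Real.pi : ℂ) * Complex.I * h x)) :=
  ⟨SPaux.Aint h x + SPaux.Bint h x, SPaux.part1 h x, SPaux.part2 h x⟩
end

section
/- Let φ : ℝ → ℂ be a Schwartz function. Then for every t ∈ ℝ the principal value Pφ(t) = pv∫ φ(μ)/(μ−t) dμ exists and equals ∫₀^∞ (φ(t+u) − φ(t−u))/u du; moreover the function t ↦ Pφ(t) is differentiable on ℝ and its derivative is the principal value of the derivative: (Pφ)'(t) = P(φ')(t) for every t. -/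
open Real MeasureTheory Filter Topology Set Metric

namespace Statement11Aux

noncomputable def G (φ : SchwartzMap ℝ ℂ) (t u : ℝ) : ℂ := (φ (t + u) - φ (t - u)) / (u : ℂ)

lemma norm_bound (φ : SchwartzMap ℝ ℂ) : ∃ C : ℝ, 0 < C ∧ ∀ x, ‖φ x‖ ≤ C := by
  obtain ⟨C, hC, h⟩ := φ.decay 0 0
  exact ⟨C, hC, fun x => by simpa using h x⟩

lemma deriv_bound (φ : SchwartzMap ℝ ℂ) : ∃ M : ℝ, 0 < M ∧ ∀ x, ‖deriv φ x‖ ≤ M := by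
  obtain ⟨M, hM, h⟩ := norm_bound (SchwartzMap.derivCLM ℝ ℂ φ)
  exact ⟨M, hM, fun x => by simpa [SchwartzMap.derivCLM_apply] using h x⟩

lemma mvt (φ : SchwartzMap ℝ ℂ) {M : ℝ} (hM : ∀ x, ‖deriv φ x‖ ≤ M) (a b : ℝ) :
    ‖φ a - φ b‖ ≤ M * |a - b| := by
  have := convex_univ.norm_image_sub_le_of_norm_deriv_le
    (f := ⇑φ) (fun x _ => φ.differentiable.differentiableAt) (fun x _ => hM x)
    (mem_univ b) (mem_univ a)
  simpa [Real.norm_eq_abs] using this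

lemma norm_G_le (φ : SchwartzMap ℝ ℂ) {M : ℝ} (hM : ∀ x, ‖deriv φ x‖ ≤ M)
    (t : ℝ) {u : ℝ} (hu : 0 < u) : ‖G φ t u‖ ≤ 2 * M := by
  have h := mvt φ hM (t + u) (t - u)
  have habs : |(t + u) - (t - u)| = 2 * u := by rw [abs_of_nonneg] <;> [ring; linarith]
  rw [habs] at h
  have : ‖G φ t u‖ = ‖φ (t + u) - φ (t - u)‖ / u := by
    rw [G, norm_div, Complex.norm_real, Real.norm_eq_abs, abs_of_pos hu]
  rw [this, div_le_iff₀ hu]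
  calc ‖φ (t + u) - φ (t - u)‖ ≤ M * (2 * u) := h
    _ = 2 * M * u := by ring

lemma int_shift (φ : SchwartzMap ℝ ℂ) (t : ℝ) : Integrable (fun u => φ (t + u)) volume :=
  ((measurePreserving_add_left volume t).integrable_comp
    φ.integrable.aestronglyMeasurable).mpr φ.integrable

lemma int_reflect (φ : SchwartzMap ℝ ℂ) (t : ℝ) : Integrable (fun u => φ (t - u)) volume :=
  ((Measure.measurePreserving_sub_left volume t).integrable_comp
    φ.integrable.aestronglyMeasurable).mpr φ.integrable

lemma contOn_G (φ : SchwartzMap ℝ ℂ) (t : ℝ) {s : Set ℝ} (hs : (0:ℝ) ∉ s) :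
    ContinuousOn (G φ t) s := by
  apply ContinuousOn.div
  · exact ((φ.continuous.comp (continuous_const.add continuous_id)).sub
      (φ.continuous.comp (continuous_const.sub continuous_id))).continuousOn
  · exact Complex.continuous_ofReal.continuousOn
  · intro u hu
    simp only [ne_eq, Complex.ofReal_eq_zero]
    rintro rfl; exact hs hu

lemma aesm_G (φ : SchwartzMap ℝ ℂ) (t : ℝ) {δ : ℝ} (hδ : 0 ≤ δ) :
    AEStronglyMeasurable (G φ t) (volume.restrict (Ioi δ)) :=
  (contOn_G φ t (fun h => lt_irrefl (0:ℝ) (hδ.trans_lt h))).aestronglyMeasurable measurableSet_Ioi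

lemma integrableOn_G (φ : SchwartzMap ℝ ℂ) (t : ℝ) {δ : ℝ} (hδ : 0 ≤ δ) :
    IntegrableOn (G φ t) (Ioi δ) := by
  obtain ⟨M, hMpos, hM⟩ := deriv_bound φ
  have h01 : IntegrableOn (G φ t) (Ioc δ (δ + 1)) := by
    apply Integrable.mono' (integrable_const (2 * M))
    · exact ((contOn_G φ t (fun h => lt_irrefl (0:ℝ) (hδ.trans_lt h))).mono
        Ioc_subset_Ioi_self).aestronglyMeasurable measurableSet_Ioc
    · refine (ae_restrict_iff' measurableSet_Ioc).2 (ae_of_all _ fun u hu => ?_)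
      exact norm_G_le φ hM t (hδ.trans_lt hu.1)
  have h1 : IntegrableOn (G φ t) (Ioi (δ + 1)) := by
    apply Integrable.mono'
      (((int_shift φ t).norm.add (int_reflect φ t).norm).integrableOn (s := Ioi (δ + 1)))
    · exact (aesm_G φ t (by linarith)).mono_measure
        (Measure.restrict_mono (fun x hx => hx) le_rfl) |>.congr (ae_of_all _ fun _ => rfl)
    · refine (ae_restrict_iff' measurableSet_Ioi).2 (ae_of_all _ fun u hu => ?_)
      have hu1 : (1:ℝ) ≤ u := by have := hu; simp only [mem_Ioi] at this; linarith
      have hupos : 0 < u := by linarith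
      have : ‖G φ t u‖ = ‖φ (t + u) - φ (t - u)‖ / u := by
        rw [G, norm_div, Complex.norm_real, Real.norm_eq_abs, abs_of_pos hupos]
      rw [this]
      calc ‖φ (t + u) - φ (t - u)‖ / u ≤ ‖φ (t + u) - φ (t - u)‖ :=
            div_le_self (norm_nonneg _) hu1
        _ ≤ ‖φ (t + u)‖ + ‖φ (t - u)‖ := norm_sub_le _ _
        _ = ((fun a => ‖φ (t + a)‖) + fun a => ‖φ (t - a)‖) u := rfl
  have : Ioi δ = Ioc δ (δ + 1) ∪ Ioi (δ + 1) := (Ioc_union_Ioi_eq_Ioi (by linarith)).symm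
  rw [this]
  exact h01.union h1

lemma integrableOn_orig_right (φ : SchwartzMap ℝ ℂ) (t : ℝ) {δ : ℝ} (hδ : 0 < δ) :
    IntegrableOn (fun μ : ℝ => φ μ / ((μ : ℂ) - (t : ℂ))) (Ioi (t + δ)) := by
  apply Integrable.mono' ((φ.integrable.norm.mul_const δ⁻¹).integrableOn (s := Ioi (t + δ)))
  · apply ContinuousOn.aestronglyMeasurable _ measurableSet_Ioi
    apply ContinuousOn.div φ.continuous.continuousOn
      ((Complex.continuous_ofReal.sub continuous_const).continuousOn)
    intro μ hμ
    have : μ ≠ t := by have := mem_Ioi.mp hμ; intro h; rw [h] at this; linarith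
    simp only [ne_eq, sub_eq_zero]
    exact fun h => this (by simpa [sub_eq_zero] using h)
  · refine (ae_restrict_iff' measurableSet_Ioi).2 (ae_of_all _ fun μ hμ => ?_)
    have hμt : δ ≤ |μ - t| := by
      rw [abs_of_pos (by have := mem_Ioi.mp hμ; linarith)]
      have := mem_Ioi.mp hμ; linarith
    have hnorm : ‖(μ : ℂ) - (t : ℂ)‖ = |μ - t| := by
      rw [show (μ : ℂ) - (t : ℂ) = ((μ - t : ℝ) : ℂ) by push_cast; ring, Complex.norm_real,
        Real.norm_eq_abs]
    rw [norm_div, hnorm, div_eq_mul_inv]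
    exact mul_le_mul_of_nonneg_left (inv_anti₀ hδ hμt) (norm_nonneg _)

lemma integrableOn_orig_left (φ : SchwartzMap ℝ ℂ) (t : ℝ) {δ : ℝ} (hδ : 0 < δ) :
    IntegrableOn (fun μ : ℝ => φ μ / ((μ : ℂ) - (t : ℂ))) (Iio (t - δ)) := by
  apply Integrable.mono' ((φ.integrable.norm.mul_const δ⁻¹).integrableOn (s := Iio (t - δ)))
  · apply ContinuousOn.aestronglyMeasurable _ measurableSet_Iio
    apply ContinuousOn.div φ.continuous.continuousOn
      ((Complex.continuous_ofReal.sub continuous_const).continuousOn)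
    intro μ hμ
    have : μ ≠ t := by have := mem_Iio.mp hμ; intro h; rw [h] at this; linarith
    simp only [ne_eq, sub_eq_zero]
    exact fun h => this (by simpa [sub_eq_zero] using h)
  · refine (ae_restrict_iff' measurableSet_Iio).2 (ae_of_all _ fun μ hμ => ?_)
    have hμt : δ ≤ |μ - t| := by
      rw [abs_of_neg (by have := mem_Iio.mp hμ; linarith)]
      have := mem_Iio.mp hμ; linarith
    have hnorm : ‖(μ : ℂ) - (t : ℂ)‖ = |μ - t| := by
      rw [show (μ : ℂ) - (t : ℂ) = ((μ - t : ℝ) : ℂ) by push_cast; ring, Complex.norm_real,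
        Real.norm_eq_abs]
    rw [norm_div, hnorm, div_eq_mul_inv]
    exact mul_le_mul_of_nonneg_left (inv_anti₀ hδ hμt) (norm_nonneg _)

lemma hpre_add (t δ : ℝ) : (fun u : ℝ => t + u) ⁻¹' Ioi (t + δ) = Ioi δ := by
  ext u; simp

lemma hpre_sub (t δ : ℝ) : (fun u : ℝ => t - u) ⁻¹' Iio (t - δ) = Ioi δ := by
  ext u; simp only [mem_preimage, mem_Iio, mem_Ioi]; constructor <;> intro h <;> linarith

lemma int_plus (φ : SchwartzMap ℝ ℂ) (t : ℝ) {δ : ℝ} (hδ : 0 < δ) :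
    IntegrableOn (fun u : ℝ => φ (t + u) / (u : ℂ)) (Ioi δ) := by
  have h := (MeasurePreserving.integrableOn_comp_preimage
      (measurePreserving_add_left (volume : Measure ℝ) t)
      (MeasurableEquiv.addLeft t).measurableEmbedding).mpr (integrableOn_orig_right φ t hδ)
  rw [hpre_add t δ] at h
  refine h.congr_fun (fun u hu => ?_) measurableSet_Ioi
  show φ (t + u) / (((t + u : ℝ) : ℂ) - (t : ℂ)) = _
  push_cast; ring_nf

lemma int_minus (φ : SchwartzMap ℝ ℂ) (t : ℝ) {δ : ℝ} (hδ : 0 < δ) :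
    IntegrableOn (fun u : ℝ => φ (t - u) / (u : ℂ)) (Ioi δ) := by
  have h := (MeasurePreserving.integrableOn_comp_preimage
      (Measure.measurePreserving_sub_left (volume : Measure ℝ) t)
      (MeasurableEquiv.subLeft t).measurableEmbedding).mpr (integrableOn_orig_left φ t hδ)
  rw [hpre_sub t δ] at h
  have h2 : IntegrableOn (fun u : ℝ => φ (t - u) / (-(u : ℂ))) (Ioi δ) := by
    refine h.congr_fun (fun u hu => ?_) measurableSet_Ioi
    show φ (t - u) / (((t - u : ℝ) : ℂ) - (t : ℂ)) = _
    push_cast; ring_nf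
  exact h2.neg.congr (ae_of_all _ fun u => by simp [div_neg])

lemma cov (φ : SchwartzMap ℝ ℂ) (t : ℝ) {δ : ℝ} (hδ : 0 < δ) :
    ∫ μ in {μ : ℝ | δ < |μ - t|}, φ μ / ((μ : ℂ) - (t : ℂ)) = ∫ u in Ioi δ, G φ t u := by
  have hset : {μ : ℝ | δ < |μ - t|} = Iio (t - δ) ∪ Ioi (t + δ) := by
    ext μ
    simp only [mem_setOf_eq, mem_union, mem_Iio, mem_Ioi, lt_abs]
    constructor
    · rintro (h | h)
      · right; linarith
      · left; linarith
    · rintro (h | h)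
      · right; linarith
      · left; linarith
  rw [hset, setIntegral_union ((Iio_disjoint_Ici (by linarith : t - δ ≤ t + δ)).mono_right Ioi_subset_Ici_self) measurableSet_Ioi
      (integrableOn_orig_left φ t hδ) (integrableOn_orig_right φ t hδ)]
  have hplus : ∫ μ in Ioi (t + δ), φ μ / ((μ : ℂ) - (t : ℂ))
      = ∫ u in Ioi δ, φ (t + u) / (u : ℂ) := by
    have h := (measurePreserving_add_left (volume : Measure ℝ) t).setIntegral_preimage_emb
      (MeasurableEquiv.addLeft t).measurableEmbedding
      (fun μ : ℝ => φ μ / ((μ : ℂ) - (t : ℂ))) (Ioi (t + δ))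
    rw [hpre_add t δ] at h
    rw [← h]
    refine setIntegral_congr_fun measurableSet_Ioi fun u hu => ?_
    show φ (t + u) / (((t + u : ℝ) : ℂ) - (t : ℂ)) = _
    push_cast; ring_nf
  have hminus : ∫ μ in Iio (t - δ), φ μ / ((μ : ℂ) - (t : ℂ))
      = -∫ u in Ioi δ, φ (t - u) / (u : ℂ) := by
    have h := (Measure.measurePreserving_sub_left (volume : Measure ℝ) t).setIntegral_preimage_emb
      (MeasurableEquiv.subLeft t).measurableEmbedding
      (fun μ : ℝ => φ μ / ((μ : ℂ) - (t : ℂ))) (Iio (t - δ))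
    rw [hpre_sub t δ] at h
    rw [← h, ← integral_neg]
    refine setIntegral_congr_fun measurableSet_Ioi fun u hu => ?_
    show φ (t - u) / (((t - u : ℝ) : ℂ) - (t : ℂ)) = _
    rw [show ((t - u : ℝ) : ℂ) - (t : ℂ) = -(u : ℂ) by push_cast; ring, div_neg]
  rw [hplus, hminus]
  rw [neg_add_eq_sub, ← integral_sub (int_plus φ t hδ) (int_minus φ t hδ)]
  refine setIntegral_congr_fun measurableSet_Ioi fun u hu => ?_
  rw [G, sub_div]

lemma tendsto_pv (φ : SchwartzMap ℝ ℂ) (t : ℝ) :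
    Tendsto (fun δ : ℝ => ∫ μ in {μ : ℝ | δ < |μ - t|}, φ μ / ((μ : ℂ) - (t : ℂ)))
      (𝓝[>] 0) (𝓝 (∫ u in Ioi (0:ℝ), G φ t u)) := by
  obtain ⟨M, hMpos, hM⟩ := deriv_bound φ
  have hsmall : Tendsto (fun δ : ℝ => ∫ u in Ioc (0:ℝ) δ, G φ t u) (𝓝[>] 0) (𝓝 0) := by
    apply squeeze_zero_norm'
    · filter_upwards [self_mem_nhdsWithin] with δ (hδ : 0 < δ)
      have hb : ∀ u ∈ Ioc (0:ℝ) δ, ‖G φ t u‖ ≤ 2 * M := fun u hu => norm_G_le φ hM t hu.1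
      calc ‖∫ u in Ioc (0:ℝ) δ, G φ t u‖ ≤ 2 * M * (volume (Ioc (0:ℝ) δ)).toReal :=
            norm_setIntegral_le_of_norm_le_const measure_Ioc_lt_top hb
        _ = 2 * M * δ := by rw [Real.volume_Ioc]; simp [hδ.le]
    · have h0 : Tendsto (fun δ : ℝ => 2 * M * δ) (𝓝 0) (𝓝 0) := by
        simpa using (tendsto_id (x := 𝓝 (0:ℝ))).const_mul (2 * M)
      exact h0.mono_left nhdsWithin_le_nhds
  have key : Tendsto (fun δ : ℝ => ∫ u in Ioi δ, G φ t u) (𝓝[>] 0)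
      (𝓝 (∫ u in Ioi (0:ℝ), G φ t u)) := by
    have hlim := tendsto_const_nhds (x := ∫ u in Ioi (0:ℝ), G φ t u) (f := 𝓝[>] (0:ℝ)) |>.sub hsmall
    rw [sub_zero] at hlim
    apply hlim.congr'
    filter_upwards [self_mem_nhdsWithin] with δ (hδ : 0 < δ)
    have hun : Ioc (0:ℝ) δ ∪ Ioi δ = Ioi 0 := Ioc_union_Ioi_eq_Ioi hδ.le
    have h1 : IntegrableOn (G φ t) (Ioc 0 δ) :=
      (integrableOn_G φ t le_rfl).mono_set (by rw [← hun]; exact subset_union_left)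
    have h2 : IntegrableOn (G φ t) (Ioi δ) :=
      (integrableOn_G φ t le_rfl).mono_set (by rw [← hun]; exact subset_union_right)
    have := setIntegral_union (Ioc_disjoint_Ioi le_rfl) measurableSet_Ioi h1 h2
    rw [hun] at this
    rw [this]; ring
  apply key.congr'
  filter_upwards [self_mem_nhdsWithin] with δ (hδ : 0 < δ) using (cov φ t hδ).symm

lemma integrableOn_inv_sq_shift (a : ℝ) :
    IntegrableOn (fun u : ℝ => ((u - a) ^ 2)⁻¹) (Ioi (a + 1)) := by
  have h0 : IntegrableOn (fun v : ℝ => v ^ (-2 : ℝ)) (Ioi 1) :=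
    integrableOn_Ioi_rpow_of_lt (by norm_num) one_pos
  have h := (MeasurePreserving.integrableOn_comp_preimage
      (measurePreserving_sub_right (volume : Measure ℝ) a)
      (MeasurableEquiv.subRight a).measurableEmbedding).mpr h0
  have hpre : (fun u : ℝ => u - a) ⁻¹' Ioi 1 = Ioi (a + 1) := by
    ext u; simp only [mem_preimage, mem_Ioi]; constructor <;> intro h <;> linarith
  rw [hpre] at h
  refine h.congr_fun (fun u hu => ?_) measurableSet_Ioi
  have hpos : 0 < u - a := by have := mem_Ioi.mp hu; linarith
  show (u - a) ^ (-2 : ℝ) = ((u - a) ^ 2)⁻¹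
  rw [show (-2 : ℝ) = ((-2 : ℤ) : ℝ) by norm_num, Real.rpow_intCast]
  rw [zpow_neg]
  norm_num

lemma hasDerivAt_P (φ : SchwartzMap ℝ ℂ) (t : ℝ) :
    HasDerivAt (fun s => ∫ u in Ioi (0:ℝ), G φ s u)
      (∫ u in Ioi (0:ℝ), G (SchwartzMap.derivCLM ℝ ℂ φ) t u) t := by
  set ψ := SchwartzMap.derivCLM ℝ ℂ φ with hψ
  obtain ⟨M₂, hM₂pos, hM₂⟩ := deriv_bound ψ
  obtain ⟨C, hCpos, hC⟩ := ψ.decay 2 0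
  have hC' : ∀ x : ℝ, |x| ^ 2 * ‖ψ x‖ ≤ C := fun x => by
    simpa [Real.norm_eq_abs] using hC x
  set a : ℝ := |t| + 1 with ha
  set bound : ℝ → ℝ := fun u => if u ≤ a + 1 then 2 * M₂ else 2 * C * ((u - a) ^ 2)⁻¹
    with hbound_def
  have hbound_int : IntegrableOn bound (Ioi (0:ℝ)) := by
    have hun : Ioc (0:ℝ) (a+1) ∪ Ioi (a+1) = Ioi 0 := Ioc_union_Ioi_eq_Ioi (by positivity)
    rw [← hun]
    apply IntegrableOn.union
    · have hf : IntegrableOn (fun _ : ℝ => 2 * M₂) (Ioc (0:ℝ) (a+1)) :=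
        integrableOn_const measure_Ioc_lt_top.ne
      exact hf.congr_fun
        (fun u hu => by simp only [hbound_def, if_pos hu.2]) measurableSet_Ioc
    · have hf : IntegrableOn (fun u : ℝ => 2 * C * ((u - a) ^ 2)⁻¹) (Ioi (a+1)) :=
        (integrableOn_inv_sq_shift a).const_mul (2 * C)
      exact hf.congr_fun
        (fun u hu => by simp only [hbound_def, if_neg (not_le.mpr (mem_Ioi.mp hu))])
        measurableSet_Ioi
  have h_bound : ∀ᵐ u ∂(volume.restrict (Ioi (0:ℝ))),
      ∀ x ∈ ball t 1, ‖G ψ x u‖ ≤ bound u := by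
    refine (ae_restrict_iff' measurableSet_Ioi).2 (ae_of_all _ fun u hu x hx => ?_)
    have hu0 : 0 < u := mem_Ioi.mp hu
    simp only [hbound_def]
    by_cases hcase : u ≤ a + 1
    · rw [if_pos hcase]
      exact norm_G_le ψ hM₂ x hu0
    · rw [if_neg hcase]
      push_neg at hcase
      have hxt : |x - t| < 1 := by
        have := mem_ball.mp hx; rwa [Real.dist_eq] at this
      have hx1 : t - 1 < x := by have := abs_lt.mp hxt; linarith [this.1]
      have hx2 : x < t + 1 := by have := abs_lt.mp hxt; linarith [this.2]
      have hua : 1 < u - a := by linarith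
      have hua0 : 0 < u - a := by linarith
      have hkey : ∀ y : ℝ, u - a ≤ |y| → ‖ψ y‖ ≤ C / (u - a) ^ 2 := by
        intro y hy
        rw [le_div_iff₀ (by positivity)]
        calc ‖ψ y‖ * (u - a) ^ 2 ≤ ‖ψ y‖ * |y| ^ 2 := by
              apply mul_le_mul_of_nonneg_left _ (norm_nonneg _)
              apply pow_le_pow_left₀ hua0.le hy
          _ = |y| ^ 2 * ‖ψ y‖ := mul_comm _ _
          _ ≤ C := hC' y
      have hb1 : ‖ψ (x + u)‖ ≤ C / (u - a) ^ 2 := by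
        apply hkey
        have h1 : u - a ≤ x + u := by
          have : -a ≤ t - 1 := by rw [ha]; cases abs_cases t <;> linarith
          linarith
        calc u - a ≤ x + u := h1
          _ ≤ |x + u| := le_abs_self _
      have hb2 : ‖ψ (x - u)‖ ≤ C / (u - a) ^ 2 := by
        apply hkey
        have h1 : u - a ≤ -(x - u) := by
          have : t + 1 ≤ a := by rw [ha]; cases abs_cases t <;> linarith
          linarith
        calc u - a ≤ -(x - u) := h1
          _ ≤ |x - u| := neg_le_abs _
      have hnorm : ‖G ψ x u‖ = ‖ψ (x + u) - ψ (x - u)‖ / u := by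
        rw [G, norm_div, Complex.norm_real, Real.norm_eq_abs, abs_of_pos hu0]
      rw [hnorm]
      have hu1 : 1 ≤ u := by linarith [abs_nonneg t]
      calc ‖ψ (x + u) - ψ (x - u)‖ / u ≤ ‖ψ (x + u) - ψ (x - u)‖ :=
            div_le_self (norm_nonneg _) hu1
        _ ≤ ‖ψ (x + u)‖ + ‖ψ (x - u)‖ := norm_sub_le _ _
        _ ≤ C / (u - a) ^ 2 + C / (u - a) ^ 2 := add_le_add hb1 hb2
        _ = 2 * C * ((u - a) ^ 2)⁻¹ := by rw [div_eq_mul_inv]; ring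
  have h_diff : ∀ᵐ u ∂(volume.restrict (Ioi (0:ℝ))),
      ∀ x ∈ ball t 1, HasDerivAt (fun s => G φ s u) (G ψ x u) x := by
    refine ae_of_all _ fun u x _ => ?_
    have h1 : HasDerivAt (fun s : ℝ => φ (s + u)) (deriv (⇑φ) (x + u)) x := by
      have hd : HasDerivAt (⇑φ) (deriv (⇑φ) (x + u)) (x + u) :=
        φ.differentiable.differentiableAt.hasDerivAt
      have h0 : HasDerivAt (fun s : ℝ => s + u) 1 x := by
        simpa using (hasDerivAt_id x).add_const u
      simpa [Function.comp_def] using hd.scomp x h0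
    have h2 : HasDerivAt (fun s : ℝ => φ (s - u)) (deriv (⇑φ) (x - u)) x := by
      have hd : HasDerivAt (⇑φ) (deriv (⇑φ) (x - u)) (x - u) :=
        φ.differentiable.differentiableAt.hasDerivAt
      have h0 : HasDerivAt (fun s : ℝ => s - u) 1 x := by
        simpa using (hasDerivAt_id x).sub_const u
      simpa [Function.comp_def] using hd.scomp x h0
    have hder := (h1.sub h2).div_const ((u : ℂ))
    have : G ψ x u = (deriv (⇑φ) (x + u) - deriv (⇑φ) (x - u)) / (u : ℂ) := by
      rw [G, hψ]; simp [SchwartzMap.derivCLM_apply]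
    rw [this]
    exact hder
  have := hasDerivAt_integral_of_dominated_loc_of_deriv_le
      (μ := volume.restrict (Ioi (0:ℝ))) (F := fun s u => G φ s u)
      (F' := fun s u => G ψ s u) (x₀ := t) (bound := bound) (ball_mem_nhds t one_pos)
      (Eventually.of_forall fun s => aesm_G φ s le_rfl)
      (integrableOn_G φ t le_rfl) (aesm_G ψ t le_rfl) h_bound hbound_int h_diff
  exact this.2

end Statement11Aux

open Statement11Aux in
/-- For a Schwartz function `φ : ℝ → ℂ`, the principal value
`Pφ(t) = pv∫ φ(μ)/(μ−t) dμ` exists for every `t` and equals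
`∫₀^∞ (φ(t+u) − φ(t−u))/u du`; moreover `t ↦ Pφ(t)` is differentiable and its
derivative is the principal value of the derivative: `(Pφ)' = P(φ')`. -/
theorem statement11 (φ : SchwartzMap ℝ ℂ) :
    ∃ P Q : ℝ → ℂ,
      (∀ t : ℝ,
        Tendsto (fun δ : ℝ => ∫ μ in {μ : ℝ | δ < |μ - t|}, φ μ / ((μ : ℂ) - (t : ℂ)))
          (𝓝[>] 0) (𝓝 (P t))) ∧
      (∀ t : ℝ, P t = ∫ u in Set.Ioi (0 : ℝ), (φ (t + u) - φ (t - u)) / (u : ℂ)) ∧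
      (∀ t : ℝ,
        Tendsto (fun δ : ℝ =>
            ∫ μ in {μ : ℝ | δ < |μ - t|}, deriv (⇑φ) μ / ((μ : ℂ) - (t : ℂ)))
          (𝓝[>] 0) (𝓝 (Q t))) ∧
      (∀ t : ℝ, HasDerivAt P (Q t) t) := by
  refine ⟨fun t => ∫ u in Set.Ioi (0:ℝ), G φ t u,
    fun t => ∫ u in Set.Ioi (0:ℝ), G (SchwartzMap.derivCLM ℝ ℂ φ) t u,
    fun t => tendsto_pv φ t, fun t => rfl, fun t => ?_, fun t => hasDerivAt_P φ t⟩
  have hrw : ∀ μ : ℝ, deriv (⇑φ) μ = SchwartzMap.derivCLM ℝ ℂ φ μ :=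
    fun μ => (SchwartzMap.derivCLM_apply ℝ φ μ).symm
  simp only [hrw]
  exact tendsto_pv (SchwartzMap.derivCLM ℝ ℂ φ) t
end

section
/- Let h : ℝ → ℂ be a Schwartz function and let ξ ∈ ℂ with Im ξ > 0. For 0 < β < π/2, the integral B(β) = (1 + ξ² tan²β) ∫_{−cot β}^{cot β} h(μ) / [ (μ − ξ·√(1 − μ² tan²β)) · √(1 − μ² tan²β) ] dμ is well defined (the integrand is integrable on (−cot β, cot β)), and as β → 0⁺ it converges to the Cauchy transform: lim_{β→0⁺} B(β) = ∫_ℝ h(μ)/(μ−ξ) dμ. -/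
open Real MeasureTheory Filter Topology

private lemma st15_cot_eq (β : ℝ) : Real.cot β = (Real.tan β)⁻¹ := by
  rw [Real.cot_eq_cos_div_sin, Real.tan_eq_sin_div_cos, inv_div]

private lemma st15_sqrt_lb {a : ℝ} (ha : |a| ≤ 1) : 1 - |a| ≤ Real.sqrt (1 - a ^ 2) := by
  have h1 : (1 - |a|) ^ 2 ≤ 1 - a ^ 2 := by nlinarith [abs_nonneg a, sq_abs a]
  calc 1 - |a| = Real.sqrt ((1 - |a|) ^ 2) := (Real.sqrt_sq (by linarith)).symm
    _ ≤ _ := Real.sqrt_le_sqrt h1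

private lemma st15_denom_lb (ξ : ℂ) (hξ : 0 < ξ.im) :
    ∃ c > 0, ∀ (μ s : ℝ), 0 ≤ s →
      c * s ≤ ‖(μ : ℂ) - ξ * s‖ ∧ c * |μ| ≤ ‖(μ : ℂ) - ξ * s‖ := by
  have hn : 0 < ‖ξ‖ := by
    refine norm_pos_iff.mpr fun h0 => ?_
    rw [h0] at hξ; simp at hξ
  refine ⟨ξ.im / (2 * (‖ξ‖ + 1)), by positivity, fun μ s hs => ?_⟩
  set c := ξ.im / (2 * (‖ξ‖ + 1)) with hc
  have him : |((μ : ℂ) - ξ * s).im| = ξ.im * s := by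
    simp [abs_of_nonneg (mul_nonneg hξ.le hs)]
  have h1 : ξ.im * s ≤ ‖(μ : ℂ) - ξ * s‖ := him ▸ Complex.abs_im_le_norm _
  have hiξ : ξ.im ≤ ‖ξ‖ := (le_abs_self _).trans (Complex.abs_im_le_norm ξ)
  have hcle : c ≤ ξ.im := by
    rw [hc, div_le_iff₀ (by positivity)]
    nlinarith
  constructor
  · exact le_trans (by nlinarith) h1
  · rcases le_or_gt (‖ξ‖ * s) (|μ| / 2) with hcase | hcase
    · have h2 : |μ| - ‖ξ‖ * s ≤ ‖(μ : ℂ) - ξ * s‖ := by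
        have := norm_sub_norm_le (μ : ℂ) (ξ * s)
        simpa [Complex.norm_real, abs_of_nonneg hs] using this
      have hc2 : c ≤ 1 / 2 := by
        rw [hc, div_le_iff₀ (by positivity)]; nlinarith
      nlinarith [abs_nonneg μ]
    · have h3 : ξ.im * (|μ| / (2 * ‖ξ‖)) ≤ ξ.im * s := by
        apply mul_le_mul_of_nonneg_left _ hξ.le
        rw [div_le_iff₀ (by positivity)] at *
        nlinarith
      refine le_trans (le_trans ?_ h3) h1
      rw [hc, div_mul_eq_mul_div, mul_div_assoc]
      have h4 : |μ| / (2 * (‖ξ‖ + 1)) ≤ |μ| / (2 * ‖ξ‖) := by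
        gcongr
        · linarith
      exact mul_le_mul_of_nonneg_left h4 hξ.le

private lemma st15_sq_lt (t : ℝ) (ht : 0 < t) {μ : ℝ} (hμ : μ ∈ Set.Ioo (-t⁻¹) t⁻¹) :
    |t * μ| < 1 := by
  obtain ⟨ha, hb⟩ := hμ
  have h1 := mul_lt_mul_of_pos_left hb ht
  have h2 := mul_lt_mul_of_pos_left ha ht
  rw [mul_inv_cancel₀ ht.ne'] at h1
  rw [mul_neg, mul_inv_cancel₀ ht.ne'] at h2
  rw [abs_lt]
  exact ⟨by linarith, h1⟩

private lemma st15_arcsin_deriv (t : ℝ) (ht : 0 < t) :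
    ∀ μ ∈ Set.Ioo (-t⁻¹) t⁻¹,
      HasDerivAt (fun x => Real.arcsin (t * x)) (t / Real.sqrt (1 - μ ^ 2 * t ^ 2)) μ := by
  intro μ hμ
  have habs := st15_sq_lt t ht hμ
  have h1 : t * μ ≠ -1 := by intro hh; rw [hh] at habs; norm_num at habs
  have h2 : t * μ ≠ 1 := by intro hh; rw [hh] at habs; norm_num at habs
  have hd := (Real.hasDerivAt_arcsin h1 h2).comp μ ((hasDerivAt_id μ).const_mul t)
  have key : t / Real.sqrt (1 - μ ^ 2 * t ^ 2) = 1 / Real.sqrt (1 - (t * μ) ^ 2) * (t * 1) := by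
    rw [show 1 - (t * μ) ^ 2 = 1 - μ ^ 2 * t ^ 2 by ring]
    rw [mul_one, one_div, div_eq_mul_inv, mul_comm]
  rw [key]
  exact hd

private lemma st15_arcsin_int (t : ℝ) (ht : 0 < t) :
    IntegrableOn (fun μ : ℝ => t / Real.sqrt (1 - μ ^ 2 * t ^ 2)) (Set.Ioo (-t⁻¹) t⁻¹) ∧
    ∫ μ in Set.Ioo (-t⁻¹) t⁻¹, t / Real.sqrt (1 - μ ^ 2 * t ^ 2) = π := by
  have hab : (-t⁻¹ : ℝ) ≤ t⁻¹ := by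
    have := inv_pos.mpr ht; linarith
  have hcont : ContinuousOn (fun x => Real.arcsin (t * x)) (Set.Icc (-t⁻¹) t⁻¹) :=
    (Real.continuous_arcsin.comp (continuous_const.mul continuous_id)).continuousOn
  have hderiv := st15_arcsin_deriv t ht
  have hnonneg : ∀ μ ∈ Set.Ioo (-t⁻¹) t⁻¹, 0 ≤ t / Real.sqrt (1 - μ ^ 2 * t ^ 2) := by
    intro μ _; positivity
  have hIoc := intervalIntegral.integrableOn_deriv_of_nonneg hcont hderiv hnonneg
  have hInt : IntegrableOn (fun μ : ℝ => t / Real.sqrt (1 - μ ^ 2 * t ^ 2))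
      (Set.Ioo (-t⁻¹) t⁻¹) := hIoc.mono_set Set.Ioo_subset_Ioc_self
  refine ⟨hInt, ?_⟩
  have hii : IntervalIntegrable (fun μ : ℝ => t / Real.sqrt (1 - μ ^ 2 * t ^ 2))
      volume (-t⁻¹) t⁻¹ := (intervalIntegrable_iff_integrableOn_Ioc_of_le hab).mpr hIoc
  have hftc := intervalIntegral.integral_eq_sub_of_hasDeriv_right_of_le hab hcont
    (fun x hx => (hderiv x hx).hasDerivWithinAt) hii
  rw [← MeasureTheory.integral_Ioc_eq_integral_Ioo, ← intervalIntegral.integral_of_le hab, hftc]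
  rw [mul_inv_cancel₀ ht.ne', mul_neg, mul_inv_cancel₀ ht.ne']
  rw [Real.arcsin_one, Real.arcsin_neg, Real.arcsin_one]
  ring

private lemma st15_norm_F (h : SchwartzMap ℝ ℂ) (ξ : ℂ) (t μ : ℝ) :
    ‖h μ / (((μ : ℂ) - ξ * (Real.sqrt (1 - μ ^ 2 * t ^ 2) : ℂ)) *
        (Real.sqrt (1 - μ ^ 2 * t ^ 2) : ℂ))‖ =
      ‖h μ‖ / (‖(μ : ℂ) - ξ * (Real.sqrt (1 - μ ^ 2 * t ^ 2) : ℂ)‖ *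
        Real.sqrt (1 - μ ^ 2 * t ^ 2)) := by
  rw [norm_div, norm_mul, Complex.norm_real, Real.norm_eq_abs, abs_of_nonneg (Real.sqrt_nonneg _)]

/-- Basic facts about `S = √(1 - μ²t²)` on the interval. -/
private lemma st15_S_facts (t : ℝ) (ht : 0 < t) {μ : ℝ} (hμ : μ ∈ Set.Ioo (-t⁻¹) t⁻¹) :
    0 < Real.sqrt (1 - μ ^ 2 * t ^ 2) ∧ Real.sqrt (1 - μ ^ 2 * t ^ 2) ≤ 1 ∧
      1 - t * |μ| ≤ Real.sqrt (1 - μ ^ 2 * t ^ 2) := by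
  have habs := st15_sq_lt t ht hμ
  have hsq : μ ^ 2 * t ^ 2 < 1 := by nlinarith [sq_abs (t * μ), abs_nonneg (t * μ)]
  refine ⟨Real.sqrt_pos.mpr (by linarith), Real.sqrt_le_one.mpr (by nlinarith [sq_nonneg (μ * t)]), ?_⟩
  have := st15_sqrt_lb (a := t * μ) habs.le
  rw [show 1 - (t * μ) ^ 2 = 1 - μ ^ 2 * t ^ 2 by ring, abs_mul, abs_of_pos ht] at this
  exact this

private lemma st15_denom_ne (ξ : ℂ) (hξ : 0 < ξ.im) {S : ℝ} (hS : 0 < S) (μ : ℝ) :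
    ((μ : ℂ) - ξ * S) * (S : ℂ) ≠ 0 := by
  apply mul_ne_zero
  · intro h0
    have : ((μ : ℂ) - ξ * S).im = 0 := by rw [h0]; simp
    simp only [Complex.sub_im, Complex.ofReal_im, Complex.mul_im, Complex.ofReal_re,
      Complex.ofReal_im, mul_zero, add_zero, zero_sub, neg_eq_zero] at this
    nlinarith
  · exact_mod_cast Complex.ofReal_ne_zero.mpr hS.ne'

private lemma st15_F_measurable (h : SchwartzMap ℝ ℂ) (ξ : ℂ) (t : ℝ) :
    Measurable (fun μ : ℝ => h μ /
      (((μ : ℂ) - ξ * (Real.sqrt (1 - μ ^ 2 * t ^ 2) : ℂ)) *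
        (Real.sqrt (1 - μ ^ 2 * t ^ 2) : ℂ))) := by
  have hS : Measurable (fun μ : ℝ => ((Real.sqrt (1 - μ ^ 2 * t ^ 2) : ℝ) : ℂ)) :=
    Complex.measurable_ofReal.comp (Real.continuous_sqrt.measurable.comp (by fun_prop))
  exact (h.continuous.measurable).div
    (((Complex.measurable_ofReal.comp measurable_id).sub (hS.const_mul ξ)).mul hS)

private lemma st15_F_integrableOn (h : SchwartzMap ℝ ℂ) (ξ : ℂ) (hξ : 0 < ξ.im)
    (t : ℝ) (ht : 0 < t) :
    IntegrableOn (fun μ : ℝ => h μ /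
      (((μ : ℂ) - ξ * (Real.sqrt (1 - μ ^ 2 * t ^ 2) : ℂ)) *
        (Real.sqrt (1 - μ ^ 2 * t ^ 2) : ℂ))) (Set.Ioo (-t⁻¹) t⁻¹) := by
  obtain ⟨c, hc, hlb⟩ := st15_denom_lb ξ hξ
  obtain ⟨C0, hC0pos, hC0⟩ := h.decay 0 0
  have hC0' : ∀ x : ℝ, ‖h x‖ ≤ C0 := fun x => by simpa using hC0 x
  set M := max 1 t with hM
  have hM1 : (1 : ℝ) ≤ M := le_max_left _ _
  have hMt : t ≤ M := le_max_right _ _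
  -- lower bound for the denominator norm
  have hdb : ∀ μ ∈ Set.Ioo (-t⁻¹) t⁻¹,
      c / (2 * M) ≤ ‖(μ : ℂ) - ξ * (Real.sqrt (1 - μ ^ 2 * t ^ 2) : ℂ)‖ := by
    intro μ hμ
    obtain ⟨hSpos, hSle, hSlb⟩ := st15_S_facts t ht hμ
    set S := Real.sqrt (1 - μ ^ 2 * t ^ 2)
    obtain ⟨hb1, hb2⟩ := hlb μ S (Real.sqrt_nonneg _)
    have hsum : 1 / M ≤ S + |μ| := by
      have h1 : t * |μ| ≤ M * |μ| := mul_le_mul_of_nonneg_right hMt (abs_nonneg μ)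
      have h2 : S / M ≤ S := by
        rw [div_le_iff₀ (by linarith)]; nlinarith [hSpos.le]
      rw [div_le_iff₀ (by linarith : (0:ℝ) < M)]
      nlinarith [hSpos.le, abs_nonneg μ]
    have : c * (1 / M) ≤ c * (S + |μ|) := mul_le_mul_of_nonneg_left hsum hc.le
    calc c / (2 * M) = c * (1 / M) / 2 := by ring
      _ ≤ c * (S + |μ|) / 2 := by linarith
      _ = (c * S + c * |μ|) / 2 := by ring
      _ ≤ ‖(μ : ℂ) - ξ * (S : ℂ)‖ := by
          have := add_le_add hb1 hb2; linarith
  -- continuity on the open interval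
  have hcS : Continuous (fun μ : ℝ => Real.sqrt (1 - μ ^ 2 * t ^ 2)) :=
    Real.continuous_sqrt.comp (by fun_prop)
  have hmeas : AEStronglyMeasurable (fun μ : ℝ => h μ /
      (((μ : ℂ) - ξ * (Real.sqrt (1 - μ ^ 2 * t ^ 2) : ℂ)) *
        (Real.sqrt (1 - μ ^ 2 * t ^ 2) : ℂ)))
      (volume.restrict (Set.Ioo (-t⁻¹) t⁻¹)) :=
    (st15_F_measurable h ξ t).aestronglyMeasurable
  -- domination
  obtain ⟨hGint, _⟩ := st15_arcsin_int t ht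
  refine Integrable.mono' ((hGint.const_mul (C0 * (2 * M) / (c * t)))) hmeas ?_
  rw [ae_restrict_iff' measurableSet_Ioo]
  filter_upwards with μ
  intro hμ
  obtain ⟨hSpos, hSle, hSlb⟩ := st15_S_facts t ht hμ
  rw [st15_norm_F]
  set S := Real.sqrt (1 - μ ^ 2 * t ^ 2)
  have hd := hdb μ hμ
  have hdpos : 0 < ‖(μ : ℂ) - ξ * (S : ℂ)‖ := lt_of_lt_of_le (by positivity) hd
  calc ‖h μ‖ / (‖(μ : ℂ) - ξ * (S : ℂ)‖ * S)
      ≤ C0 / ((c / (2 * M)) * S) := by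
        apply div_le_div₀ (le_of_lt hC0pos) (hC0' μ) (by positivity)
        exact mul_le_mul_of_nonneg_right hd hSpos.le
    _ = C0 * (2 * M) / (c * t) * (t / S) := by
        field_simp


private lemma st15_htan : Tendsto Real.tan (𝓝[Set.Ioo (0 : ℝ) (Real.pi / 2)] 0) (𝓝 0) := by
  have hc : ContinuousAt Real.tan 0 := by rw [Real.continuousAt_tan]; simp
  have h2 : Tendsto Real.tan (𝓝[Set.Ioo (0 : ℝ) (Real.pi / 2)] 0) (𝓝 (Real.tan 0)) :=
    hc.tendsto.mono_left nhdsWithin_le_nhds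
  simpa [Real.tan_zero] using h2

private lemma st15_htanpos : ∀ᶠ β in 𝓝[Set.Ioo (0 : ℝ) (Real.pi / 2)] 0, 0 < Real.tan β := by
  filter_upwards [eventually_mem_nhdsWithin] with β hβ
  exact Real.tan_pos_of_pos_of_lt_pi_div_two hβ.1 hβ.2

private lemma st15_small (h : SchwartzMap ℝ ℂ) (ξ : ℂ) (hξ : 0 < ξ.im) :
    Tendsto (fun β : ℝ =>
        ∫ μ in Set.Ioo (-(2 * Real.tan β)⁻¹) (2 * Real.tan β)⁻¹,
          h μ /
            (((μ : ℂ) - ξ * (Real.sqrt (1 - μ ^ 2 * Real.tan β ^ 2) : ℂ)) *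
              (Real.sqrt (1 - μ ^ 2 * Real.tan β ^ 2) : ℂ)))
      (𝓝[Set.Ioo (0 : ℝ) (Real.pi / 2)] 0)
      (𝓝 (∫ μ : ℝ, h μ / ((μ : ℂ) - ξ))) := by
  obtain ⟨c, hc, hlb⟩ := st15_denom_lb ξ hξ
  simp only [← MeasureTheory.integral_indicator measurableSet_Ioo]
  apply MeasureTheory.tendsto_integral_filter_of_dominated_convergence
    (fun μ => 4 / c * ‖h μ‖)
  · filter_upwards with β
    exact ((st15_F_measurable h ξ (Real.tan β)).aestronglyMeasurable).indicator measurableSet_Ioo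
  · filter_upwards [st15_htanpos] with β htβ
    filter_upwards with μ
    set t := Real.tan β
    by_cases hmem : μ ∈ Set.Ioo (-(2 * t)⁻¹) (2 * t)⁻¹
    · rw [Set.indicator_of_mem hmem, st15_norm_F]
      have hbig : μ ∈ Set.Ioo (-t⁻¹) t⁻¹ := by
        have h2i : (2 * t)⁻¹ ≤ t⁻¹ := by
          apply inv_anti₀ htβ; linarith
        exact Set.Ioo_subset_Ioo (neg_le_neg h2i) h2i hmem
      obtain ⟨hSpos, hSle, hSlb⟩ := st15_S_facts t htβ hbig
      set S := Real.sqrt (1 - μ ^ 2 * t ^ 2)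
      have hμa : |μ| ≤ (2 * t)⁻¹ := by
        rw [abs_le]
        exact ⟨hmem.1.le, hmem.2.le⟩
      have hS12 : (1 : ℝ) / 2 ≤ S := by
        have : t * |μ| ≤ t * (2 * t)⁻¹ := mul_le_mul_of_nonneg_left hμa htβ.le
        rw [mul_inv, ← mul_assoc, mul_comm t 2⁻¹, mul_assoc, mul_inv_cancel₀ htβ.ne',
          mul_one] at this
        linarith
      obtain ⟨hb1, _⟩ := hlb μ S (Real.sqrt_nonneg _)
      have hD : c / 2 ≤ ‖(μ : ℂ) - ξ * (S : ℂ)‖ := le_trans (by nlinarith) hb1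
      calc ‖h μ‖ / (‖(μ : ℂ) - ξ * (S : ℂ)‖ * S)
          ≤ ‖h μ‖ / (c / 2 * (1 / 2)) := by
            apply div_le_div_of_nonneg_left (norm_nonneg _) (by positivity)
            apply mul_le_mul hD hS12 (by norm_num) (norm_nonneg _)
        _ = 4 / c * ‖h μ‖ := by field_simp; ring
    · rw [Set.indicator_of_notMem hmem]
      simp only [norm_zero]
      positivity
  · exact (h.integrable.norm).const_mul _
  · filter_upwards with μ
    have hev1 : ∀ᶠ β in 𝓝[Set.Ioo (0 : ℝ) (Real.pi / 2)] 0,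
        2 * (|μ| + 1) * Real.tan β < 1 :=
      (st15_htan.const_mul (2 * (|μ| + 1))).eventually (gt_mem_nhds (by norm_num : 2 * (|μ| + 1) * 0 < 1))
    have heq : ∀ᶠ β in 𝓝[Set.Ioo (0 : ℝ) (Real.pi / 2)] 0,
        Set.indicator (Set.Ioo (-(2 * Real.tan β)⁻¹) (2 * Real.tan β)⁻¹)
          (fun μ => h μ /
            (((μ : ℂ) - ξ * (Real.sqrt (1 - μ ^ 2 * Real.tan β ^ 2) : ℂ)) *
              (Real.sqrt (1 - μ ^ 2 * Real.tan β ^ 2) : ℂ))) μ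
          = h μ /
            (((μ : ℂ) - ξ * (Real.sqrt (1 - μ ^ 2 * Real.tan β ^ 2) : ℂ)) *
              (Real.sqrt (1 - μ ^ 2 * Real.tan β ^ 2) : ℂ)) := by
      filter_upwards [hev1, st15_htanpos] with β hβ1 htβ
      apply Set.indicator_of_mem
      have h2t : (0 : ℝ) < 2 * Real.tan β := by linarith
      have habs : |μ| < (2 * Real.tan β)⁻¹ := by
        rw [← one_div]
        rw [lt_div_iff₀ h2t]
        nlinarith [abs_nonneg μ]
      rw [Set.mem_Ioo]
      constructor
      · have := neg_lt_neg habs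
        calc -(2 * Real.tan β)⁻¹ < -|μ| := this
          _ ≤ μ := neg_abs_le μ
      · exact lt_of_le_of_lt (le_abs_self μ) habs
    apply Tendsto.congr' (Filter.EventuallyEq.symm heq)
    -- convergence of the integrand
    have hs : Tendsto (fun β : ℝ => Real.sqrt (1 - μ ^ 2 * Real.tan β ^ 2))
        (𝓝[Set.Ioo (0 : ℝ) (Real.pi / 2)] 0) (𝓝 1) := by
      have hcont : Continuous (fun u : ℝ => Real.sqrt (1 - μ ^ 2 * u ^ 2)) :=
        Real.continuous_sqrt.comp (by fun_prop)
      have := (hcont.tendsto 0).comp st15_htan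
      simpa [Function.comp_def] using this
    have hsC : Tendsto (fun β : ℝ => ((Real.sqrt (1 - μ ^ 2 * Real.tan β ^ 2) : ℝ) : ℂ))
        (𝓝[Set.Ioo (0 : ℝ) (Real.pi / 2)] 0) (𝓝 1) := by
      have := (Complex.continuous_ofReal.tendsto 1).comp hs
      simpa [Function.comp_def] using this
    have hden : Tendsto (fun β : ℝ =>
        ((μ : ℂ) - ξ * (Real.sqrt (1 - μ ^ 2 * Real.tan β ^ 2) : ℂ)) *
          (Real.sqrt (1 - μ ^ 2 * Real.tan β ^ 2) : ℂ))
        (𝓝[Set.Ioo (0 : ℝ) (Real.pi / 2)] 0) (𝓝 (((μ : ℂ) - ξ * 1) * 1)) :=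
      (tendsto_const_nhds.sub (hsC.const_mul ξ)).mul hsC
    have hne : ((μ : ℂ) - ξ * 1) * 1 ≠ 0 := by
      rw [mul_one, mul_one]
      intro h0
      have := congrArg Complex.im h0
      simp only [Complex.sub_im, Complex.ofReal_im, Complex.zero_im, zero_sub] at this
      exact hξ.ne' (by linarith)
    have hfin := (tendsto_const_nhds (x := h μ)).div hden hne
    simpa [Pi.div_def] using hfin


private lemma st15_tail (h : SchwartzMap ℝ ℂ) (ξ : ℂ) (hξ : 0 < ξ.im) :
    Tendsto (fun β : ℝ =>
        (∫ μ in Set.Ioo (-(Real.tan β)⁻¹) (Real.tan β)⁻¹,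
          h μ /
            (((μ : ℂ) - ξ * (Real.sqrt (1 - μ ^ 2 * Real.tan β ^ 2) : ℂ)) *
              (Real.sqrt (1 - μ ^ 2 * Real.tan β ^ 2) : ℂ))) -
        ∫ μ in Set.Ioo (-(2 * Real.tan β)⁻¹) (2 * Real.tan β)⁻¹,
          h μ /
            (((μ : ℂ) - ξ * (Real.sqrt (1 - μ ^ 2 * Real.tan β ^ 2) : ℂ)) *
              (Real.sqrt (1 - μ ^ 2 * Real.tan β ^ 2) : ℂ)))
      (𝓝[Set.Ioo (0 : ℝ) (Real.pi / 2)] 0) (𝓝 0) := by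
  obtain ⟨c, hc, hlb⟩ := st15_denom_lb ξ hξ
  obtain ⟨C2, hC2pos, hC2'⟩ := h.decay 2 0
  have hC2 : ∀ x : ℝ, x ^ 2 * ‖h x‖ ≤ C2 := fun x => by
    have := hC2' x
    simpa [norm_iteratedFDeriv_zero, Real.norm_eq_abs, sq_abs] using this
  apply squeeze_zero_norm' (a := fun β : ℝ => 8 * C2 / c * π * Real.tan β ^ 2)
  · filter_upwards [st15_htanpos] with β htβ
    set t := Real.tan β with hts
    have h2t : (0 : ℝ) < 2 * t := by linarith
    have h2i : (2 * t)⁻¹ ≤ t⁻¹ := by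
      apply inv_anti₀ htβ; linarith
    have hsub : Set.Ioo (-(2 * t)⁻¹) (2 * t)⁻¹ ⊆ Set.Ioo (-t⁻¹) t⁻¹ :=
      Set.Ioo_subset_Ioo (neg_le_neg h2i) h2i
    have hFint := st15_F_integrableOn h ξ hξ t htβ
    have hdiff := MeasureTheory.integral_diff (μ := volume) (measurableSet_Ioo)
      hFint hsub
    rw [← hdiff]
    obtain ⟨hGint, hGval⟩ := st15_arcsin_int t htβ
    set D := Set.Ioo (-t⁻¹) t⁻¹ \ Set.Ioo (-(2 * t)⁻¹) (2 * t)⁻¹ with hD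
    have hpt : ∀ μ ∈ D, ‖h μ /
        (((μ : ℂ) - ξ * (Real.sqrt (1 - μ ^ 2 * t ^ 2) : ℂ)) *
          (Real.sqrt (1 - μ ^ 2 * t ^ 2) : ℂ))‖ ≤
        (8 * C2 / c * t ^ 2) * (t / Real.sqrt (1 - μ ^ 2 * t ^ 2)) := by
      intro μ hμD
      obtain ⟨hbig, hnot⟩ := hμD
      have hμa : (2 * t)⁻¹ ≤ |μ| := by
        rcases le_or_gt μ (-(2 * t)⁻¹) with hle | hgt
        · have h1 : (2 * t)⁻¹ ≤ -μ := by linarith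
          exact h1.trans (neg_le_abs μ)
        · rw [Set.mem_Ioo] at hnot
          push_neg at hnot
          exact (hnot hgt).trans (le_abs_self μ)
      obtain ⟨hSpos, hSle, hSlb⟩ := st15_S_facts t htβ hbig
      rw [st15_norm_F]
      set S := Real.sqrt (1 - μ ^ 2 * t ^ 2)
      obtain ⟨_, hb2⟩ := hlb μ S (Real.sqrt_nonneg _)
      have hμa' : 1 ≤ |μ| * (2 * t) := by
        rw [inv_eq_one_div, div_le_iff₀ h2t] at hμa
        exact hμa
      have hμsq : 1 ≤ 4 * t ^ 2 * μ ^ 2 := by nlinarith [sq_abs μ, abs_nonneg μ]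
      have h1 : ‖h μ‖ ≤ 4 * C2 * t ^ 2 := by
        nlinarith [hC2 μ, norm_nonneg (h μ), sq_nonneg μ, sq_nonneg t]
      have h2 : c / (2 * t) ≤ ‖(μ : ℂ) - ξ * (S : ℂ)‖ := by
        refine le_trans ?_ hb2
        rw [div_eq_mul_inv]
        exact mul_le_mul_of_nonneg_left hμa hc.le
      have hdpos : (0 : ℝ) < c / (2 * t) := by positivity
      calc ‖h μ‖ / (‖(μ : ℂ) - ξ * (S : ℂ)‖ * S)
          ≤ (4 * C2 * t ^ 2) / ((c / (2 * t)) * S) := by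
            apply div_le_div₀ (by positivity) h1 (by positivity)
            exact mul_le_mul_of_nonneg_right h2 hSpos.le
        _ = (8 * C2 / c * t ^ 2) * (t / S) := by
            field_simp
            ring
    calc ‖∫ μ in D, h μ /
          (((μ : ℂ) - ξ * (Real.sqrt (1 - μ ^ 2 * t ^ 2) : ℂ)) *
            (Real.sqrt (1 - μ ^ 2 * t ^ 2) : ℂ))‖
        ≤ ∫ μ in D, ‖h μ /
            (((μ : ℂ) - ξ * (Real.sqrt (1 - μ ^ 2 * t ^ 2) : ℂ)) *
              (Real.sqrt (1 - μ ^ 2 * t ^ 2) : ℂ))‖ :=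
          norm_integral_le_integral_norm _
      _ ≤ ∫ μ in D, (8 * C2 / c * t ^ 2) * (t / Real.sqrt (1 - μ ^ 2 * t ^ 2)) := by
          apply setIntegral_mono_on ((hFint.mono_set Set.diff_subset).norm)
            ((hGint.mono_set Set.diff_subset).const_mul _)
            (measurableSet_Ioo.diff measurableSet_Ioo) hpt
      _ ≤ ∫ μ in Set.Ioo (-t⁻¹) t⁻¹,
            (8 * C2 / c * t ^ 2) * (t / Real.sqrt (1 - μ ^ 2 * t ^ 2)) := by
          apply setIntegral_mono_set (hGint.const_mul _)
          · filter_upwards with μ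
            positivity
          · exact HasSubset.Subset.eventuallyLE Set.diff_subset
      _ = 8 * C2 / c * π * t ^ 2 := by
          rw [MeasureTheory.integral_const_mul, hGval]
          ring
  · have h2 := (st15_htan.pow 2).const_mul (8 * C2 / c * π)
    simpa using h2

/-- For a Schwartz function `h : ℝ → ℂ` and `ξ` in the open upper half-plane, the
boundary integral
`B(β) = (1 + ξ² tan²β) ∫_{−cot β}^{cot β} h(μ)/[(μ − ξ√(1−μ²tan²β))·√(1−μ²tan²β)] dμ`
is well defined for `0 < β < π/2` and converges to the Cauchy transform
`∫_ℝ h(μ)/(μ−ξ) dμ` as `β → 0⁺`. -/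
theorem statement15 (h : SchwartzMap ℝ ℂ) (ξ : ℂ) (hξ : 0 < ξ.im) :
    (∀ β ∈ Set.Ioo (0 : ℝ) (Real.pi / 2),
      IntegrableOn
        (fun μ : ℝ => h μ /
          (((μ : ℂ) - ξ * (Real.sqrt (1 - μ ^ 2 * Real.tan β ^ 2) : ℂ)) *
            (Real.sqrt (1 - μ ^ 2 * Real.tan β ^ 2) : ℂ)))
        (Set.Ioo (-Real.cot β) (Real.cot β))) ∧
    Tendsto (fun β : ℝ =>
        (1 + ξ ^ 2 * (Real.tan β : ℂ) ^ 2) *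
          ∫ μ in Set.Ioo (-Real.cot β) (Real.cot β),
            h μ /
              (((μ : ℂ) - ξ * (Real.sqrt (1 - μ ^ 2 * Real.tan β ^ 2) : ℂ)) *
                (Real.sqrt (1 - μ ^ 2 * Real.tan β ^ 2) : ℂ)))
      (𝓝[Set.Ioo (0 : ℝ) (Real.pi / 2)] 0)
      (𝓝 (∫ μ : ℝ, h μ / ((μ : ℂ) - ξ))) := by
  constructor
  · intro β hβ
    have ht : 0 < Real.tan β := Real.tan_pos_of_pos_of_lt_pi_div_two hβ.1 hβ.2
    rw [st15_cot_eq]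
    exact st15_F_integrableOn h ξ hξ (Real.tan β) ht
  · have hsmall := st15_small h ξ hξ
    have htail := st15_tail h ξ hξ
    have hmain0 := hsmall.add htail
    rw [add_zero] at hmain0
    have hmain : Tendsto (fun β : ℝ =>
        ∫ μ in Set.Ioo (-(Real.tan β)⁻¹) (Real.tan β)⁻¹,
          h μ /
            (((μ : ℂ) - ξ * (Real.sqrt (1 - μ ^ 2 * Real.tan β ^ 2) : ℂ)) *
              (Real.sqrt (1 - μ ^ 2 * Real.tan β ^ 2) : ℂ)))
        (𝓝[Set.Ioo (0 : ℝ) (Real.pi / 2)] 0)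
        (𝓝 (∫ μ : ℝ, h μ / ((μ : ℂ) - ξ))) := by
      apply hmain0.congr
      intro β
      ring
    have h1 : Tendsto (fun β : ℝ => ((Real.tan β : ℝ) : ℂ))
        (𝓝[Set.Ioo (0 : ℝ) (Real.pi / 2)] 0) (𝓝 0) := by
      have h0 : Tendsto (fun β : ℝ => ((Real.tan β : ℝ) : ℂ))
          (𝓝[Set.Ioo (0 : ℝ) (Real.pi / 2)] 0) (𝓝 (((0 : ℝ) : ℂ))) :=
        (Complex.continuous_ofReal.tendsto 0).comp st15_htan
      rwa [Complex.ofReal_zero] at h0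
    have hcoef : Tendsto (fun β : ℝ => 1 + ξ ^ 2 * ((Real.tan β : ℝ) : ℂ) ^ 2)
        (𝓝[Set.Ioo (0 : ℝ) (Real.pi / 2)] 0) (𝓝 1) := by
      have h2 := ((h1.pow 2).const_mul (ξ ^ 2)).const_add 1
      rw [show (1 : ℂ) + ξ ^ 2 * 0 ^ 2 = 1 by ring] at h2
      exact h2
    simp only [st15_cot_eq]
    have hfin := hcoef.mul hmain
    rw [one_mul] at hfin
    exact hfin
end

section
/- Let f : ℝ² → ℝ be continuously differentiable, axisymmetric, and supported in the closed ball of radius R > 0 (f(x₁,x₂) = 0 whenever x₁² + x₂² > R²). Fix c₁ ∈ ℝ and define ν₀(s) = (1/2)∫₀^s (s−t) · (∂f/∂x₂)(t, c₁) dt, the solution of the null-geodesic equation ν'' (s) = (1/2)(∂f/∂x₂)(s, c₁) with ν₀(0) = ν₀'(0) = 0. Then ν₀ is an even function, ν₀(−s) = ν₀(s) for all s ∈ ℝ, and there exist constants A₁, A₂ ∈ ℝ such that ν₀(s) = A₁|s| + A₂ for every s with |s| > R. -/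
open Real MeasureTheory

/-- The rotation by angle `τ` as a continuous linear map `ℝ² → ℝ²`. -/
noncomputable def rotCLM (τ : ℝ) : (ℝ × ℝ) →L[ℝ] (ℝ × ℝ) :=
  ((Real.cos τ) • (ContinuousLinearMap.fst ℝ ℝ ℝ)
      - (Real.sin τ) • (ContinuousLinearMap.snd ℝ ℝ ℝ)).prod
    ((Real.sin τ) • (ContinuousLinearMap.fst ℝ ℝ ℝ)
      + (Real.cos τ) • (ContinuousLinearMap.snd ℝ ℝ ℝ))

lemma rotCLM_apply (τ : ℝ) (x : ℝ × ℝ) :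
    rotCLM τ x = (x.1 * Real.cos τ - x.2 * Real.sin τ, x.1 * Real.sin τ + x.2 * Real.cos τ) := by
  simp [rotCLM, mul_comm]

/-- The tangential derivative of an axisymmetric function vanishes. -/
lemma tangent_zero (f : ℝ × ℝ → ℝ) (hf : ContDiff ℝ 1 f) (hax : Axisym f) (x₁ x₂ : ℝ) :
    fderiv ℝ f (x₁, x₂) (-x₂, x₁) = 0 := by
  have hdiff : Differentiable ℝ f := hf.differentiable one_ne_zero
  have h1 : HasDerivAt (fun τ => x₁ * Real.cos τ - x₂ * Real.sin τ) (-x₂) 0 := by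
    simpa using ((Real.hasDerivAt_cos 0).const_mul x₁).fun_sub ((Real.hasDerivAt_sin 0).const_mul x₂)
  have h2 : HasDerivAt (fun τ => x₁ * Real.sin τ + x₂ * Real.cos τ) x₁ 0 := by
    simpa using ((Real.hasDerivAt_sin 0).const_mul x₁).fun_add ((Real.hasDerivAt_cos 0).const_mul x₂)
  have hc : HasDerivAt
      (fun τ => ((x₁ * Real.cos τ - x₂ * Real.sin τ, x₁ * Real.sin τ + x₂ * Real.cos τ) : ℝ × ℝ))
      ((-x₂, x₁) : ℝ × ℝ) 0 := h1.prodMk h2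
  have hcomp := (hdiff _).hasFDerivAt.comp_hasDerivAt 0 hc
  simp only [Real.cos_zero, Real.sin_zero, mul_one, mul_zero, sub_zero, zero_add,
    Function.comp] at hcomp
  have heq : (f ∘ fun τ : ℝ =>
      ((x₁ * Real.cos τ - x₂ * Real.sin τ, x₁ * Real.sin τ + x₂ * Real.cos τ) : ℝ × ℝ))
      = fun _ : ℝ => f (x₁, x₂) := funext fun τ => hax τ x₁ x₂
  rw [heq] at hcomp
  exact hcomp.unique (hasDerivAt_const 0 _)

/-- The chain rule for rotations of an axisymmetric function. -/
lemma fderiv_rot (f : ℝ × ℝ → ℝ) (hf : ContDiff ℝ 1 f) (hax : Axisym f) (τ : ℝ) (x : ℝ × ℝ) :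
    fderiv ℝ f x = (fderiv ℝ f (rotCLM τ x)).comp (rotCLM τ) := by
  have hdiff : Differentiable ℝ f := hf.differentiable one_ne_zero
  have h := ((hdiff (rotCLM τ x)).hasFDerivAt).comp x (rotCLM τ).hasFDerivAt
  have heq : f ∘ (rotCLM τ) = f := funext fun y => by
    show f (rotCLM τ y) = f y
    rw [rotCLM_apply]
    exact hax τ y.1 y.2
  rw [heq] at h
  exact h.fderiv

/-- The vertical derivative of an axisymmetric `C¹` function is even in the first variable. -/
lemma g_even (f : ℝ × ℝ → ℝ) (hf : ContDiff ℝ 1 f) (hax : Axisym f) (c₁ t : ℝ) :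
    fderiv ℝ f (-t, c₁) ((0 : ℝ), (1 : ℝ)) = fderiv ℝ f (t, c₁) (0, 1) := by
  rcases eq_or_ne t 0 with rfl | ht
  · norm_num
  rcases eq_or_ne c₁ 0 with rfl | hc
  · have key : ∀ u : ℝ, u ≠ 0 → fderiv ℝ f (u, (0:ℝ)) ((0:ℝ), (1:ℝ)) = 0 := by
      intro u hu
      have hp := tangent_zero f hf hax u 0
      rw [neg_zero] at hp
      have hsm : ((0 : ℝ), u) = u • ((0 : ℝ), (1 : ℝ)) := by simp
      rw [hsm, (fderiv ℝ f (u, (0:ℝ))).map_smul, smul_eq_mul, mul_eq_zero] at hp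
      exact hp.resolve_left hu
    rw [key t ht, key (-t) (neg_ne_zero.mpr ht)]
  · set r2 : ℝ := t ^ 2 + c₁ ^ 2 with hr2
    have hr2pos : 0 < r2 := by positivity
    set a : ℝ := (c₁ ^ 2 - t ^ 2) / r2 with ha
    set b : ℝ := 2 * t * c₁ / r2 with hb
    have hab : a ^ 2 + b ^ 2 = 1 := by
      rw [ha, hb]
      field_simp
      ring
    set z : ℂ := ⟨a, b⟩ with hz
    have habs : ‖z‖ = 1 := by
      rw [Complex.norm_def, Complex.normSq_mk]
      rw [show a * a + b * b = a ^ 2 + b ^ 2 by ring, hab, Real.sqrt_one]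
    have hzne : z ≠ 0 := by
      intro h
      rw [h] at habs
      simp at habs
    set τ : ℝ := Complex.arg z with hτ
    have hcos : Real.cos τ = a := by
      rw [hτ, Complex.cos_arg hzne, habs, div_one]
    have hsin : Real.sin τ = b := by
      rw [hτ, Complex.sin_arg, habs, div_one]
    have hrotp : rotCLM τ ((t, c₁) : ℝ × ℝ) = ((-t : ℝ), c₁) := by
      rw [rotCLM_apply]
      simp only [hcos, hsin]
      refine Prod.ext ?_ ?_ <;> simp only [ha, hb] <;> field_simp <;> ring
    have hkey := fderiv_rot f hf hax τ ((t, c₁) : ℝ × ℝ)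
    have hrotv : rotCLM τ (((0 : ℝ), (1 : ℝ)) : ℝ × ℝ) = ((-b : ℝ), a) := by
      rw [rotCLM_apply]
      simp [hcos, hsin]
    have hstep : fderiv ℝ f ((t, c₁) : ℝ × ℝ) ((0 : ℝ), (1 : ℝ))
        = fderiv ℝ f ((-t : ℝ), c₁) ((-b : ℝ), a) := by
      rw [hkey, ContinuousLinearMap.comp_apply, hrotv, hrotp]
    have hdecomp : (((-b : ℝ), a) : ℝ × ℝ)
        = ((0 : ℝ), (1 : ℝ)) + (2 * t / r2) • (((-c₁ : ℝ), (-t : ℝ)) : ℝ × ℝ) := by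
      refine Prod.ext ?_ ?_ <;>
        simp only [Prod.fst_add, Prod.snd_add, Prod.smul_fst, Prod.smul_snd, smul_eq_mul,
          hb, ha] <;> field_simp <;> ring
    have htanq := tangent_zero f hf hax (-t) c₁
    rw [hstep, hdecomp, (fderiv ℝ f ((-t : ℝ), c₁)).map_add,
      (fderiv ℝ f ((-t : ℝ), c₁)).map_smul, htanq, smul_zero, add_zero]

/-- Let `f` be `C¹`, axisymmetric and supported in the closed ball of radius `R > 0`, and
let `ν₀(s) = (1/2)∫₀^s (s−t)·(∂f/∂x₂)(t,c₁) dt` be the solution of the null-geodesic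
equation `ν'' = (1/2)(∂f/∂x₂)(s,c₁)` with `ν₀(0) = ν₀'(0) = 0`.  Then `ν₀` is even, and
outside the support (`|s| > R`) it is affine in `|s|`: `ν₀(s) = A₁|s| + A₂`. -/
theorem statement17 (f : ℝ × ℝ → ℝ) (hf : ContDiff ℝ 1 f) (hax : Axisym f)
    (R : ℝ) (hR : 0 < R)
    (hsupp : ∀ x : ℝ × ℝ, x.1 ^ 2 + x.2 ^ 2 > R ^ 2 → f x = 0) (c₁ : ℝ) :
    let ν₀ : ℝ → ℝ := fun s =>
      (1 / 2) * ∫ t in (0 : ℝ)..s, (s - t) * fderiv ℝ f (t, c₁) (0, 1)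
    (∀ s : ℝ, ν₀ (-s) = ν₀ s) ∧
    ∃ A₁ A₂ : ℝ, ∀ s : ℝ, |s| > R → ν₀ s = A₁ * |s| + A₂ := by
  intro ν₀
  set g : ℝ → ℝ := fun t => fderiv ℝ f (t, c₁) (0, 1) with hg
  have hg_cont : Continuous g := by
    exact ((hf.continuous_fderiv one_ne_zero).comp
      (continuous_id.prodMk continuous_const)).clm_apply continuous_const
  have hg_even : ∀ t : ℝ, g (-t) = g t := fun t => g_even f hf hax c₁ t
  -- g vanishes for t² > R²
  have hg_supp : ∀ t : ℝ, R ^ 2 < t ^ 2 → g t = 0 := by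
    intro t htR
    have hopen : IsOpen {x : ℝ × ℝ | R ^ 2 < x.1 ^ 2 + x.2 ^ 2} :=
      isOpen_lt continuous_const (by fun_prop)
    have hmem : ((t, c₁) : ℝ × ℝ) ∈ {x : ℝ × ℝ | R ^ 2 < x.1 ^ 2 + x.2 ^ 2} := by
      simp only [Set.mem_setOf_eq]
      nlinarith [sq_nonneg c₁]
    have hev : f =ᶠ[nhds ((t, c₁) : ℝ × ℝ)] (fun _ => 0) := by
      filter_upwards [hopen.mem_nhds hmem] with x hx
      exact hsupp x hx
    have h0 : fderiv ℝ f ((t, c₁) : ℝ × ℝ) = 0 := by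
      rw [hev.fderiv_eq]
      exact fderiv_const_apply 0
    simp only [hg]
    rw [h0]
    simp
  have hgR : g R = 0 := by
    have h1 : Filter.Tendsto g (nhdsWithin R (Set.Ioi R)) (nhds (g R)) :=
      (hg_cont.tendsto R).mono_left nhdsWithin_le_nhds
    have h2 : Filter.Tendsto g (nhdsWithin R (Set.Ioi R)) (nhds 0) := by
      refine Filter.Tendsto.congr' ?_ tendsto_const_nhds
      filter_upwards [self_mem_nhdsWithin] with x hx
      have hx' : R < x := Set.mem_Ioi.mp hx
      exact (hg_supp x (by nlinarith)).symm
    exact tendsto_nhds_unique h1 h2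
  have hg_supp' : ∀ t : ℝ, R ≤ t → g t = 0 := by
    intro t htR
    rcases lt_or_eq_of_le htR with h | h
    · exact hg_supp t (by nlinarith)
    · exact h ▸ hgR
  have heven : ∀ s : ℝ, ν₀ (-s) = ν₀ s := by
    intro s
    show (1 / 2) * ∫ t in (0:ℝ)..(-s), (-s - t) * g t
        = (1 / 2) * ∫ t in (0:ℝ)..s, (s - t) * g t
    congr 1
    have h1 : (∫ x in (0:ℝ)..s, (fun t => (-s - t) * g t) (-x))
        = ∫ x in (-s)..(-(0:ℝ)), (-s - x) * g x :=
      intervalIntegral.integral_comp_neg (fun t => (-s - t) * g t)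
    rw [neg_zero] at h1
    have h2 : (∫ x in (0:ℝ)..s, (-s - (-x)) * g (-x)) = ∫ x in (0:ℝ)..s, -((s - x) * g x) := by
      refine intervalIntegral.integral_congr fun x _ => ?_
      rw [hg_even x]
      ring
    rw [h2, intervalIntegral.integral_neg] at h1
    rw [intervalIntegral.integral_symm, ← h1, neg_neg]
  refine ⟨heven, (1/2) * ∫ t in (0:ℝ)..R, g t, -((1/2) * ∫ t in (0:ℝ)..R, t * g t), ?_⟩
  have hpos : ∀ s : ℝ, R < s →
      ν₀ s = ((1/2) * ∫ t in (0:ℝ)..R, g t) * s + -((1/2) * ∫ t in (0:ℝ)..R, t * g t) := by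
    intro s hs
    show (1 / 2) * ∫ t in (0:ℝ)..s, (s - t) * g t = _
    have hint : ∀ a b : ℝ, IntervalIntegrable (fun t => (s - t) * g t) volume a b :=
      fun a b => (Continuous.intervalIntegrable (by fun_prop) a b)
    have hsplit : (∫ t in (0:ℝ)..s, (s - t) * g t)
        = (∫ t in (0:ℝ)..R, (s - t) * g t) + ∫ t in R..s, (s - t) * g t :=
      (intervalIntegral.integral_add_adjacent_intervals (hint 0 R) (hint R s)).symm
    have hzero : (∫ t in R..s, (s - t) * g t) = 0 := by
      have : (∫ t in R..s, (s - t) * g t) = ∫ _t in R..s, (0 : ℝ) := by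
        refine intervalIntegral.integral_congr fun x hx => ?_
        rw [Set.uIcc_of_le hs.le] at hx
        rw [hg_supp' x hx.1, mul_zero]
      rw [this, intervalIntegral.integral_zero]
    have hexp : (∫ t in (0:ℝ)..R, (s - t) * g t)
        = s * (∫ t in (0:ℝ)..R, g t) - ∫ t in (0:ℝ)..R, t * g t := by
      rw [← intervalIntegral.integral_const_mul, ← intervalIntegral.integral_sub
        (Continuous.intervalIntegrable (by fun_prop) 0 R)
        (Continuous.intervalIntegrable (by fun_prop) 0 R)]
      refine intervalIntegral.integral_congr fun x _ => ?_
      ring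
    rw [hsplit, hzero, add_zero, hexp]
    ring
  intro s hs
  rcases le_or_gt 0 s with h | h
  · rw [abs_of_nonneg h] at hs ⊢
    exact hpos s hs
  · rw [abs_of_neg h] at hs ⊢
    rw [← heven s]
    exact hpos (-s) hs
end
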